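/- In the graph K_n − C_m (3 ≤ m ≤ n−1), every edge has nonnegative Ollivier–Ricci curvature provided n ≥ 6; more generally, for all three families of graphs K_n − {matching of m edges}, K_n − [m edges at one vertex], and K_n − C_m considered, the Ollivier–Ricci curvature of every edge (x,y) equals #(x,y)/(d_x ∨ d_y) and is therefore nonnegative. -/

import Mathlib

set_option linter.unusedSectionVars false


open Finset
open scoped Classical

section OllivierRicciDefs

variable {V : Type*} [Fintype V]

/-- A coupling between two (finitely supported) measures on `V`. -/
def IsCoupling (μ ν : V → ℝ) (A : V → V → ℝ) : Prop :=
  (∀ u v, 0 ≤ A u v) ∧ (∀ u, ∑ v, A u v = μ u) ∧ (∀ v, ∑ u, A u v = ν v)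

/-- The degree of a vertex. -/
noncomputable def graphDeg (G : SimpleGraph V) (x : V) : ℕ :=
  (G.neighborSet x).ncard

/-- The uniform probability measure on the neighborhood of `x`. -/
noncomputable def vertexMeasure (G : SimpleGraph V) (x : V) : V → ℝ :=
  fun v => if G.Adj x v then (1 : ℝ) / (graphDeg G x : ℝ) else 0

/-- The 1-Wasserstein distance between two measures, w.r.t. the graph distance. -/
noncomputable def wassersteinDist (G : SimpleGraph V) (μ ν : V → ℝ) : ℝ :=
  sInf {c : ℝ | ∃ A : V → V → ℝ, IsCoupling μ ν A ∧
    c = ∑ u : V, ∑ v : V, A u v * (G.dist u v : ℝ)}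

/-- The Ollivier–Ricci curvature of a pair of vertices. -/
noncomputable def ricciCurv (G : SimpleGraph V) (x y : V) : ℝ :=
  1 - wassersteinDist G (vertexMeasure G x) (vertexMeasure G y) / (G.dist x y : ℝ)

/-- The number of triangles containing the edge `(x, y)`, i.e. the number of
common neighbors of `x` and `y`. -/
noncomputable def triCount (G : SimpleGraph V) (x y : V) : ℕ :=
  (G.neighborSet x ∩ G.neighborSet y).ncard

/-- A finite set of unordered pairs forms a matching: no loops, and the
edges are pairwise vertex-disjoint. -/
def IsMatchingSet {α : Type*} (M : Finset (Sym2 α)) : Prop :=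
  (∀ e ∈ M, ¬ e.IsDiag) ∧
  (M : Set (Sym2 α)).Pairwise (fun e f => ∀ x, x ∈ e → x ∉ f)

end OllivierRicciDefs


section Infra

variable {V : Type*} [Fintype V]

lemma vertexMeasure_nonneg (G : SimpleGraph V) (x v : V) : 0 ≤ vertexMeasure G x v := by
  unfold vertexMeasure; split <;> positivity

lemma graphDeg_eq_card (G : SimpleGraph V) (x : V) :
    graphDeg G x = (univ.filter (fun v => G.Adj x v)).card := by
  unfold graphDeg
  rw [Set.ncard_eq_toFinset_card']
  congr 1
  ext v
  simp [SimpleGraph.neighborSet]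
  exact Set.mem_toFinset

lemma graphDeg_pos {G : SimpleGraph V} {x y : V} (h : G.Adj x y) : 0 < graphDeg G x := by
  rw [graphDeg_eq_card]
  exact Finset.card_pos.2 ⟨y, by simp [h]⟩

lemma sum_vertexMeasure {G : SimpleGraph V} {x : V} (h : 0 < graphDeg G x) :
    ∑ v, vertexMeasure G x v = 1 := by
  unfold vertexMeasure
  rw [Finset.sum_ite, Finset.sum_const, Finset.sum_const_zero, add_zero, ← graphDeg_eq_card,
    nsmul_eq_mul]
  have : (graphDeg G x : ℝ) ≠ 0 := by positivity
  field_simp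

lemma vertexMeasure_self (G : SimpleGraph V) (x : V) : vertexMeasure G x x = 0 := by
  unfold vertexMeasure; simp

lemma vertexMeasure_of_adj {G : SimpleGraph V} {x v : V} (h : G.Adj x v) :
    vertexMeasure G x v = 1 / (graphDeg G x : ℝ) := by
  unfold vertexMeasure; simp [h]

lemma vertexMeasure_of_not_adj {G : SimpleGraph V} {x v : V} (h : ¬ G.Adj x v) :
    vertexMeasure G x v = 0 := by
  unfold vertexMeasure; simp [h]

lemma adj_of_vertexMeasure_ne {G : SimpleGraph V} {x v : V} (h : vertexMeasure G x v ≠ 0) :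
    G.Adj x v := by
  by_contra hc
  exact h (vertexMeasure_of_not_adj hc)

lemma vertexMeasure_le (G : SimpleGraph V) (x v : V) :
    vertexMeasure G x v ≤ 1 / (graphDeg G x : ℝ) := by
  unfold vertexMeasure
  split
  · exact le_refl _
  · positivity

lemma sum_min_vertexMeasure {G : SimpleGraph V} {x y : V}
    (hx : 0 < graphDeg G x) (hy : 0 < graphDeg G y) :
    ∑ v, min (vertexMeasure G x v) (vertexMeasure G y v)
      = (triCount G x y : ℝ) / (max (graphDeg G x) (graphDeg G y) : ℝ) := by
  have hdx : (0:ℝ) < (graphDeg G x : ℝ) := by exact_mod_cast hx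
  have hdy : (0:ℝ) < (graphDeg G y : ℝ) := by exact_mod_cast hy
  have key : ∀ v, min (vertexMeasure G x v) (vertexMeasure G y v) =
      if G.Adj x v ∧ G.Adj y v then (1:ℝ) / ((max (graphDeg G x) (graphDeg G y) : ℕ) : ℝ) else 0 := by
    intro v
    unfold vertexMeasure
    by_cases hA : G.Adj x v <;> by_cases hB : G.Adj y v <;>
      simp only [hA, hB, if_true, if_false, true_and, and_true, false_and, and_false]
    · rw [Nat.cast_max]
      rcases le_total (graphDeg G x) (graphDeg G y) with h | h
      · have h' : (graphDeg G x : ℝ) ≤ (graphDeg G y : ℝ) := by exact_mod_cast h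
        rw [max_eq_right h', min_eq_right (one_div_le_one_div_of_le hdx h')]
      · have h' : (graphDeg G y : ℝ) ≤ (graphDeg G x : ℝ) := by exact_mod_cast h
        rw [max_eq_left h', min_eq_left (one_div_le_one_div_of_le hdy h')]
    · exact min_eq_right (by positivity)
    · exact min_eq_left (by positivity)
    · simp
  rw [Finset.sum_congr rfl (fun v _ => key v)]
  rw [Finset.sum_ite, Finset.sum_const, Finset.sum_const_zero, add_zero, nsmul_eq_mul]
  have hcard : (univ.filter (fun v => G.Adj x v ∧ G.Adj y v)).card = triCount G x y := by
    unfold triCount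
    rw [Set.ncard_eq_toFinset_card']
    congr 1
    ext v
    simp [SimpleGraph.neighborSet]
    exact (Set.mem_toFinset (s := {w | G.Adj x w} ∩ {w | G.Adj y w})).symm
  rw [hcard, Nat.cast_max]
  ring

end Infra

section Helpers

variable {V : Type*} [Fintype V]

lemma sum_pairs_le {f : V → V → ℝ} {s : Finset (V × V)} {K : ℝ} (hK0 : 0 ≤ K)
    (h0 : ∀ p q, (p, q) ∉ s → f p q = 0) (hK : ∀ p q, (p, q) ∈ s → f p q ≤ K) :
    ∑ p, ∑ q, f p q ≤ s.card * K := by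
  classical
  have h1 : ∑ p, ∑ q, f p q = ∑ z ∈ univ ×ˢ univ, f z.1 z.2 := by
    rw [Finset.sum_product]
  rw [h1, Finset.univ_product_univ]
  rw [← Finset.sum_subset (Finset.subset_univ s)
    (fun z _ hz => h0 z.1 z.2 (by simpa using hz))]
  calc ∑ z ∈ s, f z.1 z.2 ≤ ∑ _z ∈ s, K :=
        Finset.sum_le_sum (fun z hz => hK z.1 z.2 (by simpa using hz))
  _ = s.card * K := by rw [Finset.sum_const, nsmul_eq_mul]

end Helpers

section Master

variable {V : Type*} [Fintype V]

lemma coupling_entry_le_row {μ ν : V → ℝ} {A : V → V → ℝ} (hA : IsCoupling μ ν A)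
    (u v : V) : A u v ≤ μ u := by
  rw [← hA.2.1 u]
  exact Finset.single_le_sum (fun w _ => hA.1 u w) (mem_univ v)

lemma coupling_entry_le_col {μ ν : V → ℝ} {A : V → V → ℝ} (hA : IsCoupling μ ν A)
    (u v : V) : A u v ≤ ν v := by
  rw [← hA.2.2 v]
  exact Finset.single_le_sum (fun w _ => hA.1 w v) (mem_univ u)

lemma master {G : SimpleGraph V} {x y : V} (hxy : G.Adj x y)
    (A : V → V → ℝ) (hA : IsCoupling (vertexMeasure G x) (vertexMeasure G y) A)
    (hdiag : ∀ v, min (vertexMeasure G x v) (vertexMeasure G y v) ≤ A v v)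
    (hsupp : ∀ u v, A u v ≠ 0 → u = v ∨ G.Adj u v) :
    ricciCurv G x y = (triCount G x y : ℝ) / (max (graphDeg G x) (graphDeg G y) : ℝ) ∧
      0 ≤ ricciCurv G x y := by
  classical
  set μ := vertexMeasure G x with hμdef
  set ν := vertexMeasure G y with hνdef
  have hdx := graphDeg_pos hxy
  have hdy := graphDeg_pos hxy.symm
  set t := (triCount G x y : ℝ) / (max (graphDeg G x) (graphDeg G y) : ℝ) with ht
  have ht0 : 0 ≤ t := by positivity
  have hmin : ∑ v, min (μ v) (ν v) = t := sum_min_vertexMeasure hdx hdy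
  -- total mass of any coupling is 1
  have hsum : ∀ A' : V → V → ℝ, IsCoupling μ ν A' → ∑ u, ∑ v, A' u v = 1 := by
    intro A' hA'
    rw [Finset.sum_congr rfl (fun u _ => hA'.2.1 u)]
    exact sum_vertexMeasure hdx
  -- rewriting the "off-diagonal mass"
  have hoff : ∀ A' : V → V → ℝ, IsCoupling μ ν A' →
      ∑ u, ∑ v, (if u = v then 0 else A' u v) = 1 - ∑ u, A' u u := by
    intro A' hA'
    have step : ∀ u, ∑ v, (if u = v then 0 else A' u v) = (∑ v, A' u v) - A' u u := by
      intro u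
      have h1 : ∀ v, (if u = v then 0 else A' u v) = A' u v - (if u = v then A' u v else 0) := by
        intro v; split <;> ring
      rw [Finset.sum_congr rfl (fun v _ => h1 v), Finset.sum_sub_distrib]
      congr 1
      simp
    rw [Finset.sum_congr rfl (fun u _ => step u), Finset.sum_sub_distrib, hsum A' hA']
  -- diagonal of any coupling is at most the min
  have hdle : ∀ A' : V → V → ℝ, IsCoupling μ ν A' → ∑ u, A' u u ≤ t := by
    intro A' hA'
    rw [← hmin]
    refine Finset.sum_le_sum (fun u _ => ?_)
    exact le_min (coupling_entry_le_row hA' u u) (coupling_entry_le_col hA' u u)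
  -- lower bound for the cost of any coupling
  have hlow : ∀ A' : V → V → ℝ, IsCoupling μ ν A' →
      1 - t ≤ ∑ u, ∑ v, A' u v * (G.dist u v : ℝ) := by
    intro A' hA'
    have step1 : ∀ u v, (if u = v then 0 else A' u v) ≤ A' u v * (G.dist u v : ℝ) := by
      intro u v
      by_cases huv : u = v
      · simp only [if_pos huv]
        have := hA'.1 u v
        positivity
      · simp only [if_neg huv]
        by_cases hz : A' u v = 0
        · simp [hz]
        · have hApos : 0 < A' u v := lt_of_le_of_ne (hA'.1 u v) (Ne.symm hz)
          have hμu : μ u ≠ 0 := by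
            intro h0
            have := coupling_entry_le_row hA' u v
            rw [h0] at this
            linarith
          have hνv : ν v ≠ 0 := by
            intro h0
            have := coupling_entry_le_col hA' u v
            rw [h0] at this
            linarith
          have hux : G.Adj x u := adj_of_vertexMeasure_ne hμu
          have hvy : G.Adj y v := adj_of_vertexMeasure_ne hνv
          have hreach : G.Reachable u v :=
            ((hux.symm.reachable).trans (hxy.reachable)).trans (hvy.reachable)
          have hdpos : 0 < G.dist u v := hreach.pos_dist_of_ne huv
          have hd1 : (1 : ℝ) ≤ (G.dist u v : ℝ) := by exact_mod_cast hdpos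
          nlinarith
    calc 1 - t ≤ 1 - ∑ u, A' u u := by linarith [hdle A' hA']
    _ = ∑ u, ∑ v, (if u = v then 0 else A' u v) := (hoff A' hA').symm
    _ ≤ ∑ u, ∑ v, A' u v * (G.dist u v : ℝ) :=
        Finset.sum_le_sum (fun u _ => Finset.sum_le_sum (fun v _ => step1 u v))
  -- upper bound for the cost of the given coupling
  have hup : ∑ u, ∑ v, A u v * (G.dist u v : ℝ) ≤ 1 - t := by
    have step1 : ∀ u v, A u v * (G.dist u v : ℝ) ≤ (if u = v then 0 else A u v) := by
      intro u v
      by_cases huv : u = v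
      · simp [huv, SimpleGraph.dist_self]
      · simp only [if_neg huv]
        by_cases hz : A u v = 0
        · simp [hz]
        · rcases hsupp u v hz with h | h
          · exact absurd h huv
          · rw [SimpleGraph.dist_eq_one_iff_adj.2 h]
            norm_num
    calc ∑ u, ∑ v, A u v * (G.dist u v : ℝ)
        ≤ ∑ u, ∑ v, (if u = v then 0 else A u v) :=
          Finset.sum_le_sum (fun u _ => Finset.sum_le_sum (fun v _ => step1 u v))
    _ = 1 - ∑ u, A u u := hoff A hA
    _ ≤ 1 - t := by
        have : t ≤ ∑ u, A u u := by
          rw [← hmin]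
          exact Finset.sum_le_sum (fun u _ => hdiag u)
        linarith
  have hW : wassersteinDist G μ ν = 1 - t := by
    unfold wassersteinDist
    apply le_antisymm
    · have hmem : (∑ u, ∑ v, A u v * (G.dist u v : ℝ)) ∈
        {c : ℝ | ∃ A' : V → V → ℝ, IsCoupling μ ν A' ∧
          c = ∑ u : V, ∑ v : V, A' u v * (G.dist u v : ℝ)} := ⟨A, hA, rfl⟩
      have hbdd : BddBelow {c : ℝ | ∃ A' : V → V → ℝ, IsCoupling μ ν A' ∧
          c = ∑ u : V, ∑ v : V, A' u v * (G.dist u v : ℝ)} := by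
        refine ⟨0, fun c hc => ?_⟩
        obtain ⟨A', hA', rfl⟩ := hc
        refine Finset.sum_nonneg (fun u _ => Finset.sum_nonneg (fun v _ => ?_))
        exact mul_nonneg (hA'.1 u v) (by positivity)
      exact le_trans (csInf_le hbdd hmem) hup
    · refine le_csInf ⟨_, A, hA, rfl⟩ ?_
      rintro c ⟨A', hA', rfl⟩
      exact hlow A' hA'
  have hd1 : (G.dist x y : ℝ) = 1 := by
    rw [SimpleGraph.dist_eq_one_iff_adj.2 hxy]; norm_num
  unfold ricciCurv
  rw [← hμdef, ← hνdef, hW, hd1]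
  constructor
  · ring
  · have h : 1 - (1 - t) / 1 = t := by ring
    rw [h]
    exact ht0

end Master

section Couplings

variable {V : Type*} [Fintype V]

noncomputable def exc (G : SimpleGraph V) (x y : V) : V → ℝ :=
  fun v => max (vertexMeasure G x v - vertexMeasure G y v) 0

lemma exc_nonneg (G : SimpleGraph V) (x y v : V) : 0 ≤ exc G x y v := le_max_right _ _

lemma exc_le (G : SimpleGraph V) (x y v : V) : exc G x y v ≤ vertexMeasure G x v :=
  max_le (sub_le_self _ (vertexMeasure_nonneg G y v)) (vertexMeasure_nonneg G x v)

lemma adj_of_exc_ne {G : SimpleGraph V} {x y v : V} (h : exc G x y v ≠ 0) : G.Adj x v := by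
  apply adj_of_vertexMeasure_ne (x := x) (v := v)
  intro h0
  exact h (le_antisymm (h0 ▸ exc_le G x y v) (exc_nonneg G x y v))

lemma min_add_exc (G : SimpleGraph V) (x y v : V) :
    min (vertexMeasure G x v) (vertexMeasure G y v) + exc G x y v = vertexMeasure G x v := by
  unfold exc
  rcases le_total (vertexMeasure G x v) (vertexMeasure G y v) with h | h
  · rw [min_eq_left h, max_eq_right (by linarith)]; ring
  · rw [min_eq_right h, max_eq_left (by linarith)]; ring

lemma min_add_exc' (G : SimpleGraph V) (x y v : V) :
    min (vertexMeasure G x v) (vertexMeasure G y v) + exc G y x v = vertexMeasure G y v := by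
  rw [min_comm]; exact min_add_exc G y x v

lemma exc_eq_of {G : SimpleGraph V} {x y v : V} (h1 : G.Adj x v) (h2 : ¬ G.Adj y v) :
    exc G x y v = 1 / (graphDeg G x : ℝ) := by
  unfold exc
  rw [vertexMeasure_of_adj h1, vertexMeasure_of_not_adj h2, sub_zero, max_eq_left (by positivity)]

lemma exc_fst_self (G : SimpleGraph V) (x y : V) : exc G x y x = 0 := by
  unfold exc
  rw [vertexMeasure_self]
  exact max_eq_right (by linarith [vertexMeasure_nonneg G y x])

lemma exc_zero_of_le {G : SimpleGraph V} {x y v : V}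
    (hle : 1 / (graphDeg G x : ℝ) ≤ 1 / (graphDeg G y : ℝ))
    (hyv : G.Adj y v) : exc G x y v = 0 := by
  unfold exc
  apply max_eq_right
  rw [vertexMeasure_of_adj hyv]
  have := vertexMeasure_le G x v
  linarith

lemma exc_prod_ne {G : SimpleGraph V} {x y p q : V}
    (h : exc G x y p * exc G y x q ≠ 0) :
    exc G x y p ≠ 0 ∧ exc G y x q ≠ 0 := by
  constructor
  · intro h0; exact h (by rw [h0, zero_mul])
  · intro h0; exact h (by rw [h0, mul_zero])


noncomputable def badSum (G : SimpleGraph V) (x y : V) : ℝ :=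
  ∑ p, ∑ q, if p = q ∨ G.Adj p q then 0 else exc G x y p * exc G y x q

lemma anchor {G : SimpleGraph V} {x y : V} (hxy : G.Adj x y)
    (hB : badSum G x y ≤ exc G x y y * exc G y x x) :
    ∃ A, IsCoupling (vertexMeasure G x) (vertexMeasure G y) A ∧
      (∀ v, min (vertexMeasure G x v) (vertexMeasure G y v) ≤ A v v) ∧
      (∀ u v, A u v ≠ 0 → u = v ∨ G.Adj u v) := by
  classical
  unfold badSum at hB
  set μ := vertexMeasure G x with hμdef
  set ν := vertexMeasure G y with hνdef
  set a := exc G x y with hadef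
  set b := exc G y x with hbdef
  have hμ1 : ∑ v, μ v = 1 := sum_vertexMeasure (graphDeg_pos hxy)
  have hν1 : ∑ v, ν v = 1 := sum_vertexMeasure (graphDeg_pos hxy.symm)
  have han : ∀ v, 0 ≤ a v := fun v => exc_nonneg G x y v
  have hbn : ∀ v, 0 ≤ b v := fun v => exc_nonneg G y x v
  have hμa : ∀ v, min (μ v) (ν v) + a v = μ v := fun v => min_add_exc G x y v
  have hνb : ∀ v, min (μ v) (ν v) + b v = ν v := fun v => min_add_exc' G x y v
  have hminn : ∀ v, 0 ≤ min (μ v) (ν v) :=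
    fun v => le_min (vertexMeasure_nonneg G x v) (vertexMeasure_nonneg G y v)
  set S := ∑ v, a v with hSdef
  have hSb : ∑ v, b v = S := by
    have h1 : ∑ v, (min (μ v) (ν v) + a v) = 1 := by
      rw [Finset.sum_congr rfl (fun v _ => hμa v)]; exact hμ1
    have h2 : ∑ v, (min (μ v) (ν v) + b v) = 1 := by
      rw [Finset.sum_congr rfl (fun v _ => hνb v)]; exact hν1
    rw [Finset.sum_add_distrib] at h1 h2
    rw [hSdef]; linarith
  by_cases hS0 : S = 0
  · -- then a = b = 0 and the diagonal coupling works
    have haz : ∀ v, a v = 0 := fun v =>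
      (Finset.sum_eq_zero_iff_of_nonneg (fun w _ => han w)).1 (hSdef.symm.trans hS0) v (mem_univ v)
    have hbz : ∀ v, b v = 0 := fun v =>
      (Finset.sum_eq_zero_iff_of_nonneg (fun w _ => hbn w)).1 (hSb.trans hS0) v (mem_univ v)
    refine ⟨fun u v => if u = v then min (μ u) (ν u) else 0, ⟨?_, ?_, ?_⟩, ?_, ?_⟩
    · intro u v; dsimp only; split
      · exact hminn u
      · exact le_refl 0
    · intro u
      dsimp only
      rw [Finset.sum_ite_eq univ u (fun _ => min (μ u) (ν u)), if_pos (mem_univ u)]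
      have := hμa u; have := haz u; linarith
    · intro v
      dsimp only
      have : ∀ u : V, (if u = v then min (μ u) (ν u) else 0)
          = (if v = u then min (μ v) (ν v) else 0) := by
        intro u
        by_cases h : u = v
        · subst h; simp
        · rw [if_neg h, if_neg (Ne.symm h)]
      rw [Finset.sum_congr rfl (fun u _ => this u),
        Finset.sum_ite_eq univ v (fun _ => min (μ v) (ν v)), if_pos (mem_univ v)]
      have := hνb v; have := hbz v; linarith
    · intro v; dsimp only; rw [if_pos rfl]
    · intro u v h
      dsimp only at h
      by_cases huv : u = v
      · exact Or.inl huv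
      · exact absurd (if_neg huv) h
  · have hSpos : 0 < S := lt_of_le_of_ne (Finset.sum_nonneg (fun v _ => han v)) (Ne.symm hS0)
    set R := fun p q : V => p = q ∨ G.Adj p q with hRdef
    set Bp := fun p => ∑ q, if R p q then 0 else b q with hBpdef
    set Aq := fun q => ∑ p, if R p q then 0 else a p with hAqdef
    set B := ∑ p, ∑ q, if R p q then 0 else a p * b q with hBdef
    have hB' : B ≤ a y * b x := hB
    have hBrow : B = ∑ p, a p * Bp p := by
      rw [hBdef]
      refine Finset.sum_congr rfl (fun p _ => ?_)
      rw [hBpdef, Finset.mul_sum]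
      refine Finset.sum_congr rfl (fun q _ => ?_)
      split <;> ring
    have hBcol : B = ∑ q, Aq q * b q := by
      rw [hBdef, Finset.sum_comm]
      refine Finset.sum_congr rfl (fun q _ => ?_)
      rw [hAqdef, Finset.sum_mul]
      refine Finset.sum_congr rfl (fun p _ => ?_)
      split <;> ring
    have hadj_x : ∀ p, a p ≠ 0 → G.Adj x p := fun p h => adj_of_exc_ne h
    have hadj_y : ∀ q, b q ≠ 0 → G.Adj y q := fun q h => adj_of_exc_ne h
    have hBpy : Bp y = 0 := by
      rw [hBpdef]
      apply Finset.sum_eq_zero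
      intro q _
      split
      · rfl
      · rename_i hR
        by_contra hbq
        exact hR (Or.inr (hadj_y q hbq))
    have hAqx : Aq x = 0 := by
      rw [hAqdef]
      apply Finset.sum_eq_zero
      intro p _
      split
      · rfl
      · rename_i hR
        by_contra hap
        exact hR (Or.inr (hadj_x p hap).symm)
    have hrow1 : ∀ p, ∑ q, (if R p q then b q else 0) = S - Bp p := by
      intro p
      have h1 : ∀ q, (if R p q then b q else 0) = b q - (if R p q then 0 else b q) := by
        intro q; split <;> ring
      rw [Finset.sum_congr rfl (fun q _ => h1 q), Finset.sum_sub_distrib, hSb, hBpdef]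
    have hcol1 : ∀ q, ∑ p, (if R p q then a p else 0) = S - Aq q := by
      intro q
      have h1 : ∀ p, (if R p q then a p else 0) = a p - (if R p q then 0 else a p) := by
        intro p; split <;> ring
      rw [Finset.sum_congr rfl (fun p _ => h1 p), Finset.sum_sub_distrib, ← hSdef, hAqdef]
    set T := fun p q => ((if R p q then a p * b q else 0) + (if q = x then a p * Bp p else 0)
        + (if p = y then Aq q * b q else 0) - (if p = y ∧ q = x then B else 0)) / S with hTdef
    have hBpn : ∀ p, 0 ≤ Bp p := by
      intro p; rw [hBpdef]
      refine Finset.sum_nonneg (fun q _ => ?_)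
      split
      · exact le_refl 0
      · exact hbn q
    have hAqn : ∀ q, 0 ≤ Aq q := by
      intro q; rw [hAqdef]
      refine Finset.sum_nonneg (fun p _ => ?_)
      split
      · exact le_refl 0
      · exact han p
    have hTnn : ∀ p q, 0 ≤ T p q := by
      intro p q
      rw [hTdef]
      apply div_nonneg _ hSpos.le
      have h1 : 0 ≤ (if R p q then a p * b q else 0) := by
        split
        · exact mul_nonneg (han p) (hbn q)
        · exact le_refl 0
      have h2 : 0 ≤ (if q = x then a p * Bp p else 0) := by
        split
        · exact mul_nonneg (han p) (hBpn p)
        · exact le_refl 0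
      have h3 : 0 ≤ (if p = y then Aq q * b q else 0) := by
        split
        · exact mul_nonneg (hAqn q) (hbn q)
        · exact le_refl 0
      by_cases hpq : p = y ∧ q = x
      · rw [if_pos hpq, hpq.1, hpq.2, hBpy, hAqx,
          if_pos (show R y x from Or.inr hxy.symm), if_pos rfl, if_pos rfl]
        linarith [hB']
      · rw [if_neg hpq]
        linarith
    have hTrow : ∀ u, ∑ v, T u v = a u := by
      intro u
      have expand : ∑ v, ((if R u v then a u * b v else 0) + (if v = x then a u * Bp u else 0)
          + (if u = y then Aq v * b v else 0) - (if u = y ∧ v = x then B else 0))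
          = a u * S := by
        rw [Finset.sum_sub_distrib, Finset.sum_add_distrib, Finset.sum_add_distrib]
        have e1 : ∑ v, (if R u v then a u * b v else 0) = a u * (S - Bp u) := by
          have h1 : ∀ v, (if R u v then a u * b v else 0) = a u * (if R u v then b v else 0) := by
            intro v; split <;> ring
          rw [Finset.sum_congr rfl (fun v _ => h1 v), ← Finset.mul_sum, hrow1 u]
        have e2 : ∑ v, (if v = x then a u * Bp u else 0) = a u * Bp u := by
          rw [Finset.sum_ite_eq' univ x (fun _ => a u * Bp u), if_pos (mem_univ x)]
        have e3 : ∑ v, (if u = y then Aq v * b v else 0) = if u = y then B else 0 := by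
          by_cases hu : u = y <;> simp [hu, ← hBcol]
        have e4 : ∑ v, (if u = y ∧ v = x then B else 0) = if u = y then B else 0 := by
          by_cases hu : u = y <;> simp [hu]
        rw [e1, e2, e3, e4]; ring
      simp only [hTdef]
      rw [← Finset.sum_div, expand]
      field_simp
    have hTcol : ∀ v, ∑ u, T u v = b v := by
      intro v
      have expand : ∑ u, ((if R u v then a u * b v else 0) + (if v = x then a u * Bp u else 0)
          + (if u = y then Aq v * b v else 0) - (if u = y ∧ v = x then B else 0))
          = b v * S := by
        rw [Finset.sum_sub_distrib, Finset.sum_add_distrib, Finset.sum_add_distrib]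
        have e1 : ∑ u, (if R u v then a u * b v else 0) = (S - Aq v) * b v := by
          have h1 : ∀ u, (if R u v then a u * b v else 0) = (if R u v then a u else 0) * b v := by
            intro u; split <;> ring
          rw [Finset.sum_congr rfl (fun u _ => h1 u), ← Finset.sum_mul, hcol1 v]
        have e2 : ∑ u, (if v = x then a u * Bp u else 0) = if v = x then B else 0 := by
          by_cases hv : v = x <;> simp [hv, ← hBrow]
        have e3 : ∑ u, (if u = y then Aq v * b v else 0) = Aq v * b v := by
          rw [Finset.sum_ite_eq' univ y (fun _ => Aq v * b v), if_pos (mem_univ y)]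
        have e4 : ∑ u, (if u = y ∧ v = x then B else 0) = if v = x then B else 0 := by
          have h1 : ∀ u, (if u = y ∧ v = x then B else 0) = if u = y then (if v = x then B else 0) else 0 := by
            intro u
            by_cases hu : u = y <;> by_cases hv : v = x <;> simp [hu, hv]
          rw [Finset.sum_congr rfl (fun u _ => h1 u),
            Finset.sum_ite_eq' univ y (fun _ => if v = x then B else 0), if_pos (mem_univ y)]
        rw [e1, e2, e3, e4]; ring
      simp only [hTdef]
      rw [← Finset.sum_div, expand]
      field_simp
    refine ⟨fun u v => (if u = v then min (μ u) (ν u) else 0) + T u v, ⟨?_, ?_, ?_⟩, ?_, ?_⟩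
    · intro u v
      dsimp only
      apply add_nonneg _ (hTnn u v)
      split
      · exact hminn u
      · exact le_refl 0
    · intro u
      dsimp only
      rw [Finset.sum_add_distrib, hTrow u,
        Finset.sum_ite_eq univ u (fun _ => min (μ u) (ν u)), if_pos (mem_univ u)]
      exact hμa u
    · intro v
      dsimp only
      rw [Finset.sum_add_distrib, hTcol v]
      have h1 : ∀ u : V, (if u = v then min (μ u) (ν u) else 0)
          = (if v = u then min (μ v) (ν v) else 0) := by
        intro u
        by_cases h : u = v
        · subst h; simp
        · rw [if_neg h, if_neg (Ne.symm h)]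
      rw [Finset.sum_congr rfl (fun u _ => h1 u),
        Finset.sum_ite_eq univ v (fun _ => min (μ v) (ν v)), if_pos (mem_univ v)]
      exact hνb v
    · intro v
      dsimp only
      rw [if_pos rfl]
      linarith [hTnn v v]
    · intro u v hAuv
      by_contra hR'
      have hne : u ≠ v := fun h => hR' (Or.inl h)
      have hnadj : ¬ G.Adj u v := fun h => hR' (Or.inr h)
      have hnR : ¬ R u v := hR'
      apply hAuv
      dsimp only
      rw [if_neg hne]
      simp only [hTdef]
      have t1 : (if R u v then a u * b v else 0) = 0 := if_neg hnR
      have t2 : (if v = x then a u * Bp u else 0) = 0 := by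
        by_cases hv : v = x
        · subst hv
          have hau : a u = 0 := by
            by_contra h
            exact hnR (Or.inr (hadj_x u h).symm)
          rw [if_pos rfl, hau, zero_mul]
        · exact if_neg hv
      have t3 : (if u = y then Aq v * b v else 0) = 0 := by
        by_cases hu : u = y
        · subst hu
          have hbv : b v = 0 := by
            by_contra h
            exact hnR (Or.inr (hadj_y v h))
          rw [if_pos rfl, hbv, mul_zero]
        · exact if_neg hu
      have t4 : (if u = y ∧ v = x then B else 0) = 0 := by
        refine if_neg ?_
        rintro ⟨hu, hv⟩
        subst hu; subst hv
        exact hnR (Or.inr hxy.symm)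
      rw [t1, t2, t3, t4]
      simp

lemma bijCoupling {G : SimpleGraph V} {x y : V} (hxy : G.Adj x y) (f : V → V)
    (h1 : ∀ p, exc G x y p ≠ 0 →
      exc G y x (f p) = exc G x y p ∧ (p = f p ∨ G.Adj p (f p)))
    (h2 : ∀ p p', exc G x y p ≠ 0 → exc G x y p' ≠ 0 → f p = f p' → p = p')
    (h3 : ∀ q, exc G y x q ≠ 0 → ∃ p, exc G x y p ≠ 0 ∧ f p = q) :
    ∃ A, IsCoupling (vertexMeasure G x) (vertexMeasure G y) A ∧
      (∀ v, min (vertexMeasure G x v) (vertexMeasure G y v) ≤ A v v) ∧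
      (∀ u v, A u v ≠ 0 → u = v ∨ G.Adj u v) := by
  classical
  set μ := vertexMeasure G x with hμdef
  set ν := vertexMeasure G y with hνdef
  set a := exc G x y with hadef
  set b := exc G y x with hbdef
  have han : ∀ v, 0 ≤ a v := fun v => exc_nonneg G x y v
  have hbn : ∀ v, 0 ≤ b v := fun v => exc_nonneg G y x v
  have hμa : ∀ v, min (μ v) (ν v) + a v = μ v := fun v => min_add_exc G x y v
  have hνb : ∀ v, min (μ v) (ν v) + b v = ν v := fun v => min_add_exc' G x y v
  have hminn : ∀ v, 0 ≤ min (μ v) (ν v) :=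
    fun v => le_min (vertexMeasure_nonneg G x v) (vertexMeasure_nonneg G y v)
  refine ⟨fun u v => (if u = v then min (μ u) (ν u) else 0)
      + (if a u ≠ 0 ∧ f u = v then a u else 0), ⟨?_, ?_, ?_⟩, ?_, ?_⟩
  · intro u v
    dsimp only
    apply add_nonneg
    · split
      · exact hminn u
      · exact le_refl 0
    · split
      · exact han u
      · exact le_refl 0
  · intro u
    dsimp only
    rw [Finset.sum_add_distrib,
      Finset.sum_ite_eq univ u (fun _ => min (μ u) (ν u)), if_pos (mem_univ u)]
    have h4 : ∑ v, (if a u ≠ 0 ∧ f u = v then a u else 0) = a u := by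
      by_cases hau : a u = 0
      · rw [Finset.sum_eq_zero, hau]
        intro v _
        rw [if_neg]
        rintro ⟨h, _⟩
        exact h hau
      · have : ∀ v, (if a u ≠ 0 ∧ f u = v then a u else 0) = (if f u = v then a u else 0) := by
          intro v
          by_cases hfv : f u = v
          · rw [if_pos ⟨hau, hfv⟩, if_pos hfv]
          · rw [if_neg (fun h => hfv h.2), if_neg hfv]
        rw [Finset.sum_congr rfl (fun v _ => this v),
          Finset.sum_ite_eq univ (f u) (fun _ => a u), if_pos (mem_univ (f u))]
    rw [h4]
    exact hμa u
  · intro v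
    dsimp only
    rw [Finset.sum_add_distrib]
    have h1' : ∀ u : V, (if u = v then min (μ u) (ν u) else 0)
        = (if v = u then min (μ v) (ν v) else 0) := by
      intro u
      by_cases h : u = v
      · subst h; simp
      · rw [if_neg h, if_neg (Ne.symm h)]
    rw [Finset.sum_congr rfl (fun u _ => h1' u),
      Finset.sum_ite_eq univ v (fun _ => min (μ v) (ν v)), if_pos (mem_univ v)]
    have h4 : ∑ u, (if a u ≠ 0 ∧ f u = v then a u else 0) = b v := by
      by_cases hbv : b v = 0
      · rw [Finset.sum_eq_zero, hbv]
        intro u _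
        rw [if_neg]
        rintro ⟨hau, hfu⟩
        have hb' : b v = a u := by rw [← hfu]; exact (h1 u hau).1
        exact hau (by rw [← hb', hbv])
      · obtain ⟨p0, hp0, hfp0⟩ := h3 v hbv
        rw [Finset.sum_eq_single p0]
        · rw [if_pos ⟨hp0, hfp0⟩]
          have := (h1 p0 hp0).1
          rw [hfp0] at this
          exact this.symm
        · intro u _ hu
          rw [if_neg]
          rintro ⟨hau, hfu⟩
          exact hu (h2 u p0 hau hp0 (hfu.trans hfp0.symm))
        · intro h
          exact absurd (mem_univ p0) h
    rw [h4]
    exact hνb v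
  · intro v
    dsimp only
    rw [if_pos rfl]
    have : 0 ≤ (if a v ≠ 0 ∧ f v = v then a v else 0) := by
      split
      · exact han v
      · exact le_refl 0
    linarith
  · intro u v hAuv
    dsimp only at hAuv
    by_cases huv : u = v
    · exact Or.inl huv
    · rw [if_neg huv] at hAuv
      right
      by_cases hc : a u ≠ 0 ∧ f u = v
      · obtain ⟨hau, hfu⟩ := hc
        rcases (h1 u hau).2 with h | h
        · exact absurd (h.trans hfu) huv
        · exact hfu ▸ h
      · rw [if_neg hc] at hAuv
        simp at hAuv
lemma badSum_le_of {G : SimpleGraph V} (x y : V) {s : Finset (V × V)} {K : ℝ}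
    (hK0 : 0 ≤ K)
    (h0 : ∀ p q, (p, q) ∉ s → ¬(p = q ∨ G.Adj p q) → exc G x y p * exc G y x q = 0)
    (hK : ∀ p q, (p, q) ∈ s → ¬(p = q ∨ G.Adj p q) → exc G x y p * exc G y x q ≤ K) :
    badSum G x y ≤ s.card * K := by
  classical
  unfold badSum
  apply sum_pairs_le hK0
  · intro p q hps
    split
    · rfl
    · rename_i hnR
      exact h0 p q hps hnR
  · intro p q hps
    split
    · exact hK0
    · rename_i hnR
      exact hK p q hps hnR

lemma badSum_zero_of {G : SimpleGraph V} (x y : V)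
    (h : ∀ p q, ¬(p = q ∨ G.Adj p q) → exc G x y p * exc G y x q = 0) :
    badSum G x y ≤ exc G x y y * exc G y x x := by
  classical
  have hz : badSum G x y = 0 := by
    unfold badSum
    apply Finset.sum_eq_zero; intro p _
    apply Finset.sum_eq_zero; intro q _
    split
    · rfl
    · rename_i hnR
      exact h p q hnR
  rw [hz]
  exact mul_nonneg (exc_nonneg G x y y) (exc_nonneg G y x x)

end Couplings

section Family1

lemma family1 : ∀ (n m : ℕ), 4 ≤ n → 1 ≤ m → m ≤ n / 2 →
      ∀ (M : Finset (Sym2 (Fin n))), IsMatchingSet M → M.card = m →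
      ∀ (G : SimpleGraph (Fin n)), G = ⊤ \ SimpleGraph.fromEdgeSet ↑M →
      ∀ x y : Fin n, G.Adj x y →
        ricciCurv G x y =
          (triCount G x y : ℝ) / (max (graphDeg G x) (graphDeg G y) : ℝ) ∧
        0 ≤ ricciCurv G x y := by
  intro n m hn hm1 hm2 M hM hMcard G hG x y hxy
  have hadj : ∀ u v : Fin n, G.Adj u v ↔ u ≠ v ∧ s(u, v) ∉ M := by
    intro u v
    rw [hG]
    simp only [SimpleGraph.sdiff_adj, SimpleGraph.top_adj, SimpleGraph.fromEdgeSet_adj,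
      Finset.mem_coe]
    tauto
  have hB : badSum G x y ≤ exc G x y y * exc G y x x := by
    apply badSum_zero_of
    intro p q hnR
    by_contra hne
    obtain ⟨hap, hbq⟩ := exc_prod_ne hne
    have hxp : G.Adj x p := adj_of_exc_ne hap
    have hyq : G.Adj y q := adj_of_exc_ne hbq
    have hpq : p ≠ q := fun h => hnR (Or.inl h)
    have hpqM : s(p, q) ∈ M := by
      by_contra hmem
      exact hnR (Or.inr ((hadj p q).2 ⟨hpq, hmem⟩))
    rcases le_total (1 / (graphDeg G x : ℝ)) (1 / (graphDeg G y : ℝ)) with hab | hab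
    · have hnyp : ¬ G.Adj y p := by
        intro h
        exact hap (exc_zero_of_le hab h)
      have hpy : p ≠ y := by
        intro h; subst h; exact hnR (Or.inr hyq)
      have hpyM : s(p, y) ∈ M := by
        by_contra hmem
        exact hnyp ((hadj y p).2 ⟨Ne.symm hpy, by rwa [Sym2.eq_swap]⟩)
      have heq : s(p, q) = s(p, y) := by
        by_contra hne'
        exact (hM.2 hpqM hpyM hne') p (by simp) (by simp)
      have hqy : q = y := by
        rw [Sym2.eq_iff] at heq
        rcases heq with ⟨_, h⟩ | ⟨h1, _⟩
        · exact h
        · exact absurd h1 hpy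
      rw [hqy] at hbq
      exact hbq (exc_fst_self G y x)
    · have hnxq : ¬ G.Adj x q := by
        intro h
        exact hbq (exc_zero_of_le hab h)
      have hqx : q ≠ x := by
        intro h; subst h; exact hnR (Or.inr hxp.symm)
      have hqxM : s(q, x) ∈ M := by
        by_contra hmem
        exact hnxq ((hadj x q).2 ⟨Ne.symm hqx, by rwa [Sym2.eq_swap]⟩)
      have heq : s(p, q) = s(q, x) := by
        by_contra hne'
        exact (hM.2 hpqM hqxM hne') q (by simp) (by simp)
      have hpx : p = x := by
        rw [Sym2.eq_iff] at heq
        rcases heq with ⟨h1, _⟩ | ⟨h1, _⟩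
        · exact absurd h1 hpq
        · exact h1
      rw [hpx] at hap
      exact hap (exc_fst_self G x y)
  obtain ⟨A, hA, hd, hs⟩ := anchor hxy hB
  exact master hxy A hA hd hs

end Family1

section Family2

lemma deg_eq_card_compl {V : Type*} [Fintype V] [DecidableEq V] {G : SimpleGraph V} {v : V}
    {F : Finset V} (h : ∀ w, G.Adj v w ↔ w ∉ F) :
    graphDeg G v = Fintype.card V - F.card := by
  rw [graphDeg_eq_card]
  have : univ.filter (fun w => G.Adj v w) = univ \ F := by
    ext w
    simp [h w]
  rw [this, Finset.card_sdiff_of_subset (Finset.subset_univ F), Finset.card_univ]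

lemma arith1 {c d k : ℝ} (hc : 0 < c) (hd : 0 < d) (hk : 0 ≤ k) (h : k * (d - c) ≤ d) :
    k * ((1/c - 1/d) * (1/d)) ≤ (1/c) * (1/d) := by
  have hcd : (0:ℝ) < c * d * d := by positivity
  have e1 : k * ((1/c - 1/d) * (1/d)) = (k * (d - c)) / (c * d * d) := by
    field_simp
  have e2 : (1/c) * (1/d) = d / (c * d * d) := by
    field_simp
  rw [e1, e2, div_le_div_iff₀ hcd hcd]
  nlinarith

lemma family2 : ∀ (n m : ℕ), 4 ≤ n → 1 ≤ m → m ≤ n - 3 →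
      ∀ (u₀ : Fin n) (S : Finset (Fin n)), u₀ ∉ S → S.card = m →
      ∀ (G : SimpleGraph (Fin n)),
        G = ⊤ \ SimpleGraph.fromEdgeSet {e | ∃ x ∈ S, e = s(u₀, x)} →
      ∀ x y : Fin n, G.Adj x y →
        ricciCurv G x y =
          (triCount G x y : ℝ) / (max (graphDeg G x) (graphDeg G y) : ℝ) ∧
        0 ≤ ricciCurv G x y := by
  intro n m hn hm1 hm2 u₀ S hu₀S hScard G hG x y hxy
  have hmem : ∀ p q : Fin n, s(p, q) ∈ ({e | ∃ x ∈ S, e = s(u₀, x)} : Set (Sym2 (Fin n))) ↔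
      (p = u₀ ∧ q ∈ S) ∨ (q = u₀ ∧ p ∈ S) := by
    intro p q
    simp only [Set.mem_setOf_eq]
    constructor
    · rintro ⟨σ, hσ, h⟩
      rw [Sym2.eq_iff] at h
      rcases h with ⟨h1, h2⟩ | ⟨h1, h2⟩
      · exact Or.inl ⟨h1, h2 ▸ hσ⟩
      · exact Or.inr ⟨h2, h1 ▸ hσ⟩
    · rintro (⟨hp, hq⟩ | ⟨hq, hp⟩)
      · exact ⟨q, hq, by rw [hp]⟩
      · exact ⟨p, hp, by rw [hq, Sym2.eq_swap]⟩
  have hadj : ∀ u v : Fin n, G.Adj u v ↔ u ≠ v ∧ ¬((u = u₀ ∧ v ∈ S) ∨ (v = u₀ ∧ u ∈ S)) := by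
    intro u v
    rw [hG]
    simp only [SimpleGraph.sdiff_adj, SimpleGraph.top_adj, SimpleGraph.fromEdgeSet_adj]
    constructor
    · rintro ⟨hne, h⟩
      exact ⟨hne, fun hc => h ⟨(hmem u v).2 hc, hne⟩⟩
    · rintro ⟨hne, h⟩
      exact ⟨hne, fun hc => h ((hmem u v).1 hc.1)⟩
  -- the zero-badness case
  have hB0 : (x ∈ S ↔ y ∈ S) → badSum G x y ≤ exc G x y y * exc G y x x := by
    intro hcond
    apply badSum_zero_of
    intro p q hnR
    by_contra hne
    obtain ⟨hap, hbq⟩ := exc_prod_ne hne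
    have hxp : G.Adj x p := adj_of_exc_ne hap
    have hyq : G.Adj y q := adj_of_exc_ne hbq
    have hpq : p ≠ q := fun h => hnR (Or.inl h)
    have hnadj : ¬ G.Adj p q := fun h => hnR (Or.inr h)
    have hEpq : (p = u₀ ∧ q ∈ S) ∨ (q = u₀ ∧ p ∈ S) := by
      by_contra hc
      exact hnadj ((hadj p q).2 ⟨hpq, hc⟩)
    rcases le_total (1 / (graphDeg G x : ℝ)) (1 / (graphDeg G y : ℝ)) with hab | hab
    · have hnyp : ¬ G.Adj y p := fun h => hap (exc_zero_of_le hab h)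
      have hpy : p ≠ y := fun h => hnR (Or.inr (by rw [h]; exact hyq))
      have Hyp : (y = u₀ ∧ p ∈ S) ∨ (p = u₀ ∧ y ∈ S) := by
        by_contra hc
        exact hnyp ((hadj y p).2 ⟨Ne.symm hpy, hc⟩)
      rcases Hyp with ⟨hyu, _⟩ | ⟨hpu, hyS'⟩
      · rcases hEpq with ⟨hpu, _⟩ | ⟨hqu, _⟩
        · exact hpy (hpu.trans hyu.symm)
        · exact hbq (by rw [hqu, ← hyu]; exact exc_fst_self G y x)
      · have hxS' : x ∈ S := hcond.2 hyS'
        exact ((hadj x p).1 hxp).2 (Or.inr ⟨hpu, hxS'⟩)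
    · have hnxq : ¬ G.Adj x q := fun h => hbq (exc_zero_of_le hab h)
      have hqx : q ≠ x := fun h => hnR (Or.inr (by rw [h]; exact hxp.symm))
      have Hxq : (x = u₀ ∧ q ∈ S) ∨ (q = u₀ ∧ x ∈ S) := by
        by_contra hc
        exact hnxq ((hadj x q).2 ⟨Ne.symm hqx, hc⟩)
      rcases Hxq with ⟨hxu, _⟩ | ⟨hqu, hxS'⟩
      · rcases hEpq with ⟨hpu, _⟩ | ⟨hqu, _⟩
        · exact G.irrefl (by rwa [hpu, ← hxu] at hxp)
        · exact hqx (hqu.trans hxu.symm)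
      · have hyS' : y ∈ S := hcond.1 hxS'
        exact ((hadj y q).1 hyq).2 (Or.inr ⟨hqu, hyS'⟩)

  have hN4 : (4:ℝ) ≤ (n:ℝ) := by exact_mod_cast hn
  have hc2 : (0:ℝ) < (n:ℝ) - 2 := by linarith
  have hc1 : (0:ℝ) < (n:ℝ) - 1 := by linarith
  have hmn : m - 1 ≤ n - 1 := by omega
  have hkcast : ((m - 1 : ℕ) : ℝ) ≤ (n:ℝ) - 1 := by
    calc ((m - 1 : ℕ) : ℝ) ≤ ((n - 1 : ℕ) : ℝ) := by exact_mod_cast hmn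
    _ = (n:ℝ) - 1 := by rw [Nat.cast_sub (by omega)]; norm_num
  by_cases hxS : x ∈ S <;> by_cases hyS : y ∈ S
  · obtain ⟨A, hA, hd, hs⟩ := anchor hxy (hB0 (iff_of_true hxS hyS))
    exact master hxy A hA hd hs
  · -- x ∈ S, y ∉ S
    have hyu : y ≠ u₀ := by
      intro h
      exact ((hadj x y).1 hxy).2 (Or.inr ⟨h, hxS⟩)
    have hxu : x ≠ u₀ := fun h => hu₀S (h ▸ hxS)
    have hdx : graphDeg G x = n - 2 := by
      have hF : ∀ w, G.Adj x w ↔ w ∉ ({x, u₀} : Finset (Fin n)) := by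
        intro w
        rw [hadj]
        simp only [Finset.mem_insert, Finset.mem_singleton]
        constructor
        · rintro ⟨hne, hno⟩
          push_neg
          exact ⟨Ne.symm hne, fun h => hno (Or.inr ⟨h, hxS⟩)⟩
        · intro hw
          push_neg at hw
          refine ⟨Ne.symm hw.1, ?_⟩
          rintro (⟨hxu', _⟩ | ⟨hwu, _⟩)
          · exact hxu hxu'
          · exact hw.2 hwu
      rw [deg_eq_card_compl hF, Fintype.card_fin]
      congr 1
      rw [Finset.card_insert_of_notMem (by simpa using hxu), Finset.card_singleton]
    have hdy : graphDeg G y = n - 1 := by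
      have hF : ∀ w, G.Adj y w ↔ w ∉ ({y} : Finset (Fin n)) := by
        intro w
        rw [hadj]
        simp only [Finset.mem_singleton]
        constructor
        · rintro ⟨hne, _⟩
          exact Ne.symm hne
        · intro hw
          refine ⟨Ne.symm hw, ?_⟩
          rintro (⟨hyu', _⟩ | ⟨hwu, hyS'⟩)
          · exact hyu hyu'
          · exact hyS hyS'
      rw [deg_eq_card_compl hF, Fintype.card_fin, Finset.card_singleton]
    have hdxR : (graphDeg G x : ℝ) = (n:ℝ) - 2 := by
      rw [hdx, Nat.cast_sub (by omega)]; norm_num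
    have hdyR : (graphDeg G y : ℝ) = (n:ℝ) - 1 := by
      rw [hdy, Nat.cast_sub (by omega)]; norm_num
    have hle : (1:ℝ) / (graphDeg G y : ℝ) ≤ 1 / (graphDeg G x : ℝ) := by
      rw [hdxR, hdyR]
      exact one_div_le_one_div_of_le hc2 (by linarith)
    have hdiffnn : (0:ℝ) ≤ 1/((n:ℝ)-2) - 1/((n:ℝ)-1) := by
      have := one_div_le_one_div_of_le hc2 (show (n:ℝ)-2 ≤ (n:ℝ)-1 by linarith)
      linarith
    have hKnn : (0:ℝ) ≤ (1/((n:ℝ)-2) - 1/((n:ℝ)-1)) * (1/((n:ℝ)-1)) :=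
      mul_nonneg hdiffnn (by positivity)
    have hB : badSum G x y ≤ exc G x y y * exc G y x x := by
      have hay : exc G x y y = 1/((n:ℝ)-2) := by
        rw [exc_eq_of hxy (G.irrefl (v := y)), hdxR]
      have hbx : exc G y x x = 1/((n:ℝ)-1) := by
        rw [exc_eq_of hxy.symm (G.irrefl (v := x)), hdyR]
      set s : Finset (Fin n × Fin n) := (S.erase x) ×ˢ ({u₀} : Finset (Fin n)) with hsdef
      have h0 : ∀ p q : Fin n, (p, q) ∉ s → ¬(p = q ∨ G.Adj p q) →
          exc G x y p * exc G y x q = 0 := by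
        intro p q hps hnR
        by_contra hne
        obtain ⟨hap, hbq⟩ := exc_prod_ne hne
        have hxp : G.Adj x p := adj_of_exc_ne hap
        have hpq : p ≠ q := fun h => hnR (Or.inl h)
        have hnxq : ¬ G.Adj x q := fun h => hbq (exc_zero_of_le hle h)
        have hqx : q ≠ x := fun h => hnR (Or.inr (by rw [h]; exact hxp.symm))
        have Hxq : (x = u₀ ∧ q ∈ S) ∨ (q = u₀ ∧ x ∈ S) := by
          by_contra hc
          exact hnxq ((hadj x q).2 ⟨Ne.symm hqx, hc⟩)
        have hqu : q = u₀ := by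
          rcases Hxq with ⟨hxu', _⟩ | ⟨h, _⟩
          · exact absurd hxu' hxu
          · exact h
        have hnadj : ¬ G.Adj p q := fun h => hnR (Or.inr h)
        have hpS : p ∈ S := by
          have hEpq : (p = u₀ ∧ q ∈ S) ∨ (q = u₀ ∧ p ∈ S) := by
            by_contra hc
            exact hnadj ((hadj p q).2 ⟨hpq, hc⟩)
          rcases hEpq with ⟨hpu, _⟩ | ⟨_, h⟩
          · exact absurd (hpu.trans hqu.symm) hpq
          · exact h
        have hpx : p ≠ x := by
          intro h
          rw [h] at hap
          exact hap (exc_fst_self G x y)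
        apply hps
        rw [hsdef]
        simp only [Finset.mem_product, Finset.mem_erase, Finset.mem_singleton]
        exact ⟨⟨hpx, hpS⟩, hqu⟩
      have hKb : ∀ p q : Fin n, (p, q) ∈ s → ¬(p = q ∨ G.Adj p q) →
          exc G x y p * exc G y x q
            ≤ (1/((n:ℝ)-2) - 1/((n:ℝ)-1)) * (1/((n:ℝ)-1)) := by
        intro p q hps _
        rw [hsdef] at hps
        simp only [Finset.mem_product, Finset.mem_erase, Finset.mem_singleton] at hps
        obtain ⟨⟨hpx, hpS⟩, hqu⟩ := hps
        have hyp : G.Adj y p := by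
          rw [hadj]
          refine ⟨fun h => hyS (by rw [h]; exact hpS), ?_⟩
          rintro (⟨hyu', _⟩ | ⟨hpu', _⟩)
          · exact hyu hyu'
          · exact hu₀S (hpu' ▸ hpS)
        have hap2 : exc G x y p ≤ 1/((n:ℝ)-2) - 1/((n:ℝ)-1) := by
          have h1 : vertexMeasure G x p ≤ 1/((n:ℝ)-2) := by
            have := vertexMeasure_le G x p
            rwa [hdxR] at this
          have h2 : vertexMeasure G y p = 1/((n:ℝ)-1) := by
            rw [vertexMeasure_of_adj hyp, hdyR]
          unfold exc
          apply max_le _ hdiffnn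
          linarith
        have hbq2 : exc G y x q ≤ 1/((n:ℝ)-1) := by
          calc exc G y x q ≤ vertexMeasure G y q := exc_le G y x q
            _ ≤ 1/(graphDeg G y : ℝ) := vertexMeasure_le G y q
            _ = 1/((n:ℝ)-1) := by rw [hdyR]
        exact mul_le_mul hap2 hbq2 (exc_nonneg G y x q) hdiffnn
      have hcard : s.card = m - 1 := by
        rw [hsdef, Finset.card_product, Finset.card_erase_of_mem hxS,
          Finset.card_singleton, hScard, mul_one]
      rw [hay, hbx]
      calc badSum G x y
          ≤ (s.card : ℝ) * ((1/((n:ℝ)-2) - 1/((n:ℝ)-1)) * (1/((n:ℝ)-1))) :=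
            badSum_le_of x y hKnn h0 hKb
        _ = ((m - 1 : ℕ) : ℝ) * ((1/((n:ℝ)-2) - 1/((n:ℝ)-1)) * (1/((n:ℝ)-1))) := by rw [hcard]
        _ ≤ (1/((n:ℝ)-2)) * (1/((n:ℝ)-1)) := by
            apply arith1 hc2 hc1 (Nat.cast_nonneg _)
            have he : ((n:ℝ) - 1) - ((n:ℝ) - 2) = 1 := by ring
            rw [he, mul_one]
            exact hkcast
    obtain ⟨A, hA, hd, hs⟩ := anchor hxy hB
    exact master hxy A hA hd hs
  · -- x ∉ S, y ∈ S
    have hxu : x ≠ u₀ := by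
      intro h
      exact ((hadj x y).1 hxy).2 (Or.inl ⟨h, hyS⟩)
    have hyu : y ≠ u₀ := fun h => hu₀S (h ▸ hyS)
    have hdx : graphDeg G x = n - 1 := by
      have hF : ∀ w, G.Adj x w ↔ w ∉ ({x} : Finset (Fin n)) := by
        intro w
        rw [hadj]
        simp only [Finset.mem_singleton]
        constructor
        · rintro ⟨hne, _⟩
          exact Ne.symm hne
        · intro hw
          refine ⟨Ne.symm hw, ?_⟩
          rintro (⟨hxu', _⟩ | ⟨hwu, hxS'⟩)
          · exact hxu hxu'
          · exact hxS hxS'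
      rw [deg_eq_card_compl hF, Fintype.card_fin, Finset.card_singleton]
    have hdy : graphDeg G y = n - 2 := by
      have hF : ∀ w, G.Adj y w ↔ w ∉ ({y, u₀} : Finset (Fin n)) := by
        intro w
        rw [hadj]
        simp only [Finset.mem_insert, Finset.mem_singleton]
        constructor
        · rintro ⟨hne, hno⟩
          push_neg
          exact ⟨Ne.symm hne, fun h => hno (Or.inr ⟨h, hyS⟩)⟩
        · intro hw
          push_neg at hw
          refine ⟨Ne.symm hw.1, ?_⟩
          rintro (⟨hyu', _⟩ | ⟨hwu, _⟩)
          · exact hyu hyu'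
          · exact hw.2 hwu
      rw [deg_eq_card_compl hF, Fintype.card_fin]
      congr 1
      rw [Finset.card_insert_of_notMem (by simpa using hyu), Finset.card_singleton]
    have hdxR : (graphDeg G x : ℝ) = (n:ℝ) - 1 := by
      rw [hdx, Nat.cast_sub (by omega)]; norm_num
    have hdyR : (graphDeg G y : ℝ) = (n:ℝ) - 2 := by
      rw [hdy, Nat.cast_sub (by omega)]; norm_num
    have hle : (1:ℝ) / (graphDeg G x : ℝ) ≤ 1 / (graphDeg G y : ℝ) := by
      rw [hdxR, hdyR]
      exact one_div_le_one_div_of_le hc2 (by linarith)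
    have hdiffnn : (0:ℝ) ≤ 1/((n:ℝ)-2) - 1/((n:ℝ)-1) := by
      have := one_div_le_one_div_of_le hc2 (show (n:ℝ)-2 ≤ (n:ℝ)-1 by linarith)
      linarith
    have hKnn : (0:ℝ) ≤ (1/((n:ℝ)-1)) * (1/((n:ℝ)-2) - 1/((n:ℝ)-1)) :=
      mul_nonneg (by positivity) hdiffnn
    have hB : badSum G x y ≤ exc G x y y * exc G y x x := by
      have hay : exc G x y y = 1/((n:ℝ)-1) := by
        rw [exc_eq_of hxy (G.irrefl (v := y)), hdxR]
      have hbx : exc G y x x = 1/((n:ℝ)-2) := by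
        rw [exc_eq_of hxy.symm (G.irrefl (v := x)), hdyR]
      set s : Finset (Fin n × Fin n) := ({u₀} : Finset (Fin n)) ×ˢ (S.erase y) with hsdef
      have h0 : ∀ p q : Fin n, (p, q) ∉ s → ¬(p = q ∨ G.Adj p q) →
          exc G x y p * exc G y x q = 0 := by
        intro p q hps hnR
        by_contra hne
        obtain ⟨hap, hbq⟩ := exc_prod_ne hne
        have hyq : G.Adj y q := adj_of_exc_ne hbq
        have hpq : p ≠ q := fun h => hnR (Or.inl h)
        have hnyp : ¬ G.Adj y p := fun h => hap (exc_zero_of_le hle h)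
        have hpy : p ≠ y := fun h => hnR (Or.inr (by rw [h]; exact hyq))
        have Hyp : (y = u₀ ∧ p ∈ S) ∨ (p = u₀ ∧ y ∈ S) := by
          by_contra hc
          exact hnyp ((hadj y p).2 ⟨Ne.symm hpy, hc⟩)
        have hpu : p = u₀ := by
          rcases Hyp with ⟨hyu', _⟩ | ⟨h, _⟩
          · exact absurd hyu' hyu
          · exact h
        have hnadj : ¬ G.Adj p q := fun h => hnR (Or.inr h)
        have hqS : q ∈ S := by
          have hEpq : (p = u₀ ∧ q ∈ S) ∨ (q = u₀ ∧ p ∈ S) := by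
            by_contra hc
            exact hnadj ((hadj p q).2 ⟨hpq, hc⟩)
          rcases hEpq with ⟨_, h⟩ | ⟨hqu, _⟩
          · exact h
          · exact absurd (hpu.trans hqu.symm) (fun h => hpq h)
        have hqy : q ≠ y := by
          intro h
          rw [h] at hbq
          exact hbq (exc_fst_self G y x)
        apply hps
        rw [hsdef]
        simp only [Finset.mem_product, Finset.mem_erase, Finset.mem_singleton]
        exact ⟨hpu, hqy, hqS⟩
      have hKb : ∀ p q : Fin n, (p, q) ∈ s → ¬(p = q ∨ G.Adj p q) →
          exc G x y p * exc G y x q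
            ≤ (1/((n:ℝ)-1)) * (1/((n:ℝ)-2) - 1/((n:ℝ)-1)) := by
        intro p q hps _
        rw [hsdef] at hps
        simp only [Finset.mem_product, Finset.mem_erase, Finset.mem_singleton] at hps
        obtain ⟨hpu, hqy, hqS⟩ := hps
        have hxq : G.Adj x q := by
          rw [hadj]
          refine ⟨fun h => hxS (by rw [h]; exact hqS), ?_⟩
          rintro (⟨hxu', _⟩ | ⟨hqu', _⟩)
          · exact hxu hxu'
          · exact hu₀S (hqu' ▸ hqS)
        have hap2 : exc G x y p ≤ 1/((n:ℝ)-1) := by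
          calc exc G x y p ≤ vertexMeasure G x p := exc_le G x y p
            _ ≤ 1/(graphDeg G x : ℝ) := vertexMeasure_le G x p
            _ = 1/((n:ℝ)-1) := by rw [hdxR]
        have hbq2 : exc G y x q ≤ 1/((n:ℝ)-2) - 1/((n:ℝ)-1) := by
          have h1 : vertexMeasure G y q ≤ 1/((n:ℝ)-2) := by
            have := vertexMeasure_le G y q
            rwa [hdyR] at this
          have h2 : vertexMeasure G x q = 1/((n:ℝ)-1) := by
            rw [vertexMeasure_of_adj hxq, hdxR]
          unfold exc
          apply max_le _ hdiffnn
          linarith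
        exact mul_le_mul hap2 hbq2 (exc_nonneg G y x q) (by positivity)
      have hcard : s.card = m - 1 := by
        rw [hsdef, Finset.card_product, Finset.card_erase_of_mem hyS,
          Finset.card_singleton, hScard, one_mul]
      rw [hay, hbx]
      calc badSum G x y
          ≤ (s.card : ℝ) * ((1/((n:ℝ)-1)) * (1/((n:ℝ)-2) - 1/((n:ℝ)-1))) :=
            badSum_le_of x y hKnn h0 hKb
        _ = ((m - 1 : ℕ) : ℝ) * ((1/((n:ℝ)-2) - 1/((n:ℝ)-1)) * (1/((n:ℝ)-1))) := by
            rw [hcard]; ring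
        _ ≤ (1/((n:ℝ)-2)) * (1/((n:ℝ)-1)) := by
            apply arith1 hc2 hc1 (Nat.cast_nonneg _)
            have he : ((n:ℝ) - 1) - ((n:ℝ) - 2) = 1 := by ring
            rw [he, mul_one]
            exact hkcast
        _ = (1/((n:ℝ)-1)) * (1/((n:ℝ)-2)) := by ring
    obtain ⟨A, hA, hd, hs⟩ := anchor hxy hB
    exact master hxy A hA hd hs
  · obtain ⟨A, hA, hd, hs⟩ := anchor hxy (hB0 (iff_of_false hxS hyS))
    exact master hxy A hA hd hs

end Family2

section Family3

lemma arith2 {N : ℝ} (h6 : 6 ≤ N) :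
    2 * ((1/(N-1)) * (1/(N-3) - 1/(N-1))) ≤ (1/(N-1)) * (1/(N-3)) := by
  have h1 : (0:ℝ) < N - 1 := by linarith
  have h3 : (0:ℝ) < N - 3 := by linarith
  have hd : (0:ℝ) < (N-3) * (N-1) * (N-1) := by positivity
  have e1 : 2 * ((1/(N-1)) * (1/(N-3) - 1/(N-1))) = 4 / ((N-3) * (N-1) * (N-1)) := by
    field_simp
    ring
  have e2 : (1/(N-1)) * (1/(N-3)) = (N-1) / ((N-3) * (N-1) * (N-1)) := by
    field_simp
  rw [e1, e2, div_le_div_iff₀ hd hd]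
  nlinarith

lemma family3 : ∀ (n m : ℕ), 6 ≤ n → 3 ≤ m → m ≤ n - 1 →
      ∀ (c : ZMod m → Fin n), Function.Injective c →
      ∀ (G : SimpleGraph (Fin n)),
        G = ⊤ \ SimpleGraph.fromEdgeSet {e | ∃ i : ZMod m, e = s(c i, c (i + 1))} →
      ∀ x y : Fin n, G.Adj x y →
        ricciCurv G x y =
          (triCount G x y : ℝ) / (max (graphDeg G x) (graphDeg G y) : ℝ) ∧
        0 ≤ ricciCurv G x y := by
  intro n m hn hm1 hm2 c hc G hG x y hxy
  haveI : NeZero m := ⟨by omega⟩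
  have h1z : (1 : ZMod m) ≠ 0 := by
    intro h
    have h' : ((1:ℕ) : ZMod m) = 0 := by exact_mod_cast h
    rw [ZMod.natCast_eq_zero_iff] at h'
    have := Nat.le_of_dvd (by norm_num) h'
    omega
  have h2z : (2 : ZMod m) ≠ 0 := by
    intro h
    have h' : ((2:ℕ) : ZMod m) = 0 := by exact_mod_cast h
    rw [ZMod.natCast_eq_zero_iff] at h'
    have := Nat.le_of_dvd (by norm_num) h'
    omega
  have hmem : ∀ p q : Fin n,
      s(p, q) ∈ ({e | ∃ i : ZMod m, e = s(c i, c (i + 1))} : Set (Sym2 (Fin n))) ↔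
      ∃ k : ZMod m, (p = c k ∧ q = c (k + 1)) ∨ (q = c k ∧ p = c (k + 1)) := by
    intro p q
    simp only [Set.mem_setOf_eq]
    constructor
    · rintro ⟨k, h⟩
      rw [Sym2.eq_iff] at h
      rcases h with ⟨h1, h2⟩ | ⟨h1, h2⟩
      · exact ⟨k, Or.inl ⟨h1, h2⟩⟩
      · exact ⟨k, Or.inr ⟨h2, h1⟩⟩
    · rintro ⟨k, ⟨h1, h2⟩ | ⟨h1, h2⟩⟩
      · exact ⟨k, by rw [h1, h2]⟩
      · exact ⟨k, by rw [h1, h2, Sym2.eq_swap]⟩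
  have hadj : ∀ u v : Fin n, G.Adj u v ↔ u ≠ v ∧
      ¬∃ k : ZMod m, (u = c k ∧ v = c (k + 1)) ∨ (v = c k ∧ u = c (k + 1)) := by
    intro u v
    rw [hG]
    simp only [SimpleGraph.sdiff_adj, SimpleGraph.top_adj, SimpleGraph.fromEdgeSet_adj]
    constructor
    · rintro ⟨hne, h⟩
      exact ⟨hne, fun hcc => h ⟨(hmem u v).2 hcc, hne⟩⟩
    · rintro ⟨hne, h⟩
      exact ⟨hne, fun hcc => h ((hmem u v).1 hcc.1)⟩
  have hdeg_off : ∀ v : Fin n, (∀ k, c k ≠ v) → graphDeg G v = n - 1 := by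
    intro v hv
    have hF : ∀ w, G.Adj v w ↔ w ∉ ({v} : Finset (Fin n)) := by
      intro w
      rw [hadj]
      simp only [Finset.mem_singleton]
      constructor
      · rintro ⟨hne, _⟩
        exact Ne.symm hne
      · intro hw
        refine ⟨Ne.symm hw, ?_⟩
        rintro ⟨k, ⟨h1, _⟩ | ⟨_, h2⟩⟩
        · exact hv k h1.symm
        · exact hv (k + 1) h2.symm
    rw [deg_eq_card_compl hF, Fintype.card_fin, Finset.card_singleton]
  have hon : ∀ (k : ZMod m) (w : Fin n),
      G.Adj (c k) w ↔ (w ≠ c k ∧ w ≠ c (k - 1) ∧ w ≠ c (k + 1)) := by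
    intro k w
    rw [hadj]
    constructor
    · rintro ⟨hne, hno⟩
      refine ⟨Ne.symm hne, ?_, ?_⟩
      · intro h
        exact hno ⟨k - 1, Or.inr ⟨h, by rw [sub_add_cancel]⟩⟩
      · intro h
        exact hno ⟨k, Or.inl ⟨rfl, h⟩⟩
    · rintro ⟨hw1, hw2, hw3⟩
      refine ⟨Ne.symm hw1, ?_⟩
      rintro ⟨k', ⟨h1, h2⟩ | ⟨h1, h2⟩⟩
      · have hk : k = k' := hc h1
        rw [← hk] at h2
        exact hw3 h2
      · have hk : k = k' + 1 := hc h2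
        have hk' : k' = k - 1 := by rw [hk]; ring
        rw [hk'] at h1
        exact hw2 h1
  have hdeg_on : ∀ k : ZMod m, graphDeg G (c k) = n - 3 := by
    intro k
    have hF : ∀ w, G.Adj (c k) w ↔ w ∉ ({c k, c (k - 1), c (k + 1)} : Finset (Fin n)) := by
      intro w
      rw [hon k w]
      simp only [Finset.mem_insert, Finset.mem_singleton]
      push_neg
      tauto
    rw [deg_eq_card_compl hF, Fintype.card_fin]
    congr 1
    rw [Finset.card_insert_of_notMem, Finset.card_insert_of_notMem, Finset.card_singleton]
    · simp only [Finset.mem_singleton]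
      intro h
      exact h2z (by linear_combination -(hc h))
    · simp only [Finset.mem_insert, Finset.mem_singleton]
      push_neg
      constructor
      · intro h
        exact h1z (by linear_combination hc h)
      · intro h
        exact h1z (by linear_combination -(hc h))
  have hN6 : (6:ℝ) ≤ (n:ℝ) := by exact_mod_cast hn
  have hc1 : (0:ℝ) < (n:ℝ) - 1 := by linarith
  have hc3 : (0:ℝ) < (n:ℝ) - 3 := by linarith
  by_cases hxc : ∃ i, c i = x <;> by_cases hyc : ∃ j, c j = y
  · -- both on the cycle
    obtain ⟨i, hxi⟩ := hxc
    obtain ⟨j, hyj⟩ := hyc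
    subst hxi
    subst hyj
    have hij : i ≠ j := by
      intro h
      rw [h] at hxy
      exact G.irrefl hxy
    have hnoedge : ¬∃ k : ZMod m, (c i = c k ∧ c j = c (k + 1)) ∨ (c j = c k ∧ c i = c (k + 1)) :=
      ((hadj _ _).1 hxy).2
    have hji1 : j ≠ i + 1 := fun h => hnoedge ⟨i, Or.inl ⟨rfl, by rw [h]⟩⟩
    have hij1 : i ≠ j + 1 := fun h => hnoedge ⟨j, Or.inr ⟨rfl, by rw [h]⟩⟩
    have hdxR : (graphDeg G (c i) : ℝ) = (n:ℝ) - 3 := by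
      rw [hdeg_on i, Nat.cast_sub (by omega)]; norm_num
    have hdyR : (graphDeg G (c j) : ℝ) = (n:ℝ) - 3 := by
      rw [hdeg_on j, Nat.cast_sub (by omega)]; norm_num
    have hvalpos : (0:ℝ) < 1/((n:ℝ)-3) := by positivity
    have hle : (1:ℝ) / (graphDeg G (c i) : ℝ) ≤ 1 / (graphDeg G (c j) : ℝ) := by
      rw [hdxR, hdyR]
    have hle' : (1:ℝ) / (graphDeg G (c j) : ℝ) ≤ 1 / (graphDeg G (c i) : ℝ) := by
      rw [hdxR, hdyR]
    have hadjcc : ∀ a b : ZMod m, a ≠ b → a ≠ b - 1 → a ≠ b + 1 → G.Adj (c b) (c a) := by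
      intro a b g1 g2 g3
      exact (hon b (c a)).2 ⟨fun h => g1 (hc h), fun h => g2 (hc h), fun h => g3 (hc h)⟩
    have hnadjm : ∀ k l : ZMod m, l = k - 1 → ¬ G.Adj (c k) (c l) := by
      intro k l h hadj'
      exact ((hon k _).1 hadj').2.1 (by rw [h])
    have hnadjp : ∀ k l : ZMod m, l = k + 1 → ¬ G.Adj (c k) (c l) := by
      intro k l h hadj'
      exact ((hon k _).1 hadj').2.2 (by rw [h])
    have haval : ∀ p, G.Adj (c i) p → ¬ G.Adj (c j) p →
        exc G (c i) (c j) p = 1/((n:ℝ)-3) := by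
      intro p h1 h2
      rw [exc_eq_of h1 h2, hdxR]
    have hbval : ∀ q, G.Adj (c j) q → ¬ G.Adj (c i) q →
        exc G (c j) (c i) q = 1/((n:ℝ)-3) := by
      intro q h1 h2
      rw [exc_eq_of h1 h2, hdyR]
    have hanz : ∀ p, G.Adj (c i) p → ¬ G.Adj (c j) p → exc G (c i) (c j) p ≠ 0 := by
      intro p h1 h2
      rw [haval p h1 h2]
      exact ne_of_gt hvalpos
    have hbnz : ∀ q, G.Adj (c j) q → ¬ G.Adj (c i) q → exc G (c j) (c i) q ≠ 0 := by
      intro q h1 h2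
      rw [hbval q h1 h2]
      exact ne_of_gt hvalpos
    have hdecompa : ∀ p, exc G (c i) (c j) p ≠ 0 →
        G.Adj (c i) p ∧ (p = c j ∨ p = c (j - 1) ∨ p = c (j + 1)) := by
      intro p hap
      have hxp := adj_of_exc_ne hap
      have hnyp : ¬ G.Adj (c j) p := fun h => hap (exc_zero_of_le hle h)
      refine ⟨hxp, ?_⟩
      by_contra hcon
      push_neg at hcon
      exact hnyp ((hon j p).2 ⟨hcon.1, hcon.2.1, hcon.2.2⟩)
    have hdecompb : ∀ q, exc G (c j) (c i) q ≠ 0 →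
        G.Adj (c j) q ∧ (q = c i ∨ q = c (i - 1) ∨ q = c (i + 1)) := by
      intro q hbq
      have hyq := adj_of_exc_ne hbq
      have hnxq : ¬ G.Adj (c i) q := fun h => hbq (exc_zero_of_le hle' h)
      refine ⟨hyq, ?_⟩
      by_contra hcon
      push_neg at hcon
      exact hnxq ((hon i q).2 ⟨hcon.1, hcon.2.1, hcon.2.2⟩)
    have hay_nz : exc G (c i) (c j) (c j) ≠ 0 := hanz _ hxy (G.irrefl (v := c j))
    have hbx_nz : exc G (c j) (c i) (c i) ≠ 0 := hbnz _ hxy.symm (G.irrefl (v := c i))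
    have hval_ab : exc G (c j) (c i) (c i) = exc G (c i) (c j) (c j) := by
      rw [haval _ hxy (G.irrefl (v := c j)), hbval _ hxy.symm (G.irrefl (v := c i))]
    by_cases hA : j = i + 2 <;> by_cases hB2 : j = i - 2
    · -- case 4 : degenerate, j = i + 2 = i - 2
      subst hA
      have h4 : (4 : ZMod m) = 0 := by linear_combination hB2
      have hsupp : ∀ p, exc G (c i) (c (i+2)) p ≠ 0 → p = c (i + 2) := by
        intro p hap
        obtain ⟨hxp, hp3⟩ := hdecompa p hap
        rcases hp3 with rfl | rfl | rfl
        · rfl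
        · exact absurd hxp (hnadjp i (i + 2 - 1) (by ring))
        · exact absurd hxp (hnadjm i (i + 2 + 1) (by linear_combination h4))
      have hh1 : ∀ p, exc G (c i) (c (i+2)) p ≠ 0 →
          exc G (c (i+2)) (c i) (c i) = exc G (c i) (c (i+2)) p ∧
          (p = c i ∨ G.Adj p (c i)) := by
        intro p hap
        rw [hsupp p hap]
        exact ⟨hval_ab, Or.inr hxy.symm⟩
      have hh2 : ∀ p p', exc G (c i) (c (i+2)) p ≠ 0 → exc G (c i) (c (i+2)) p' ≠ 0 →
          (c i : Fin n) = c i → p = p' := by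
        intro p p' hap hap' _
        rw [hsupp p hap, hsupp p' hap']
      have hh3 : ∀ q, exc G (c (i+2)) (c i) q ≠ 0 →
          ∃ p, exc G (c i) (c (i+2)) p ≠ 0 ∧ (c i : Fin n) = q := by
        intro q hbq
        obtain ⟨hyq, hq3⟩ := hdecompb q hbq
        rcases hq3 with rfl | rfl | rfl
        · exact ⟨c (i + 2), hay_nz, rfl⟩
        · exact absurd hyq (hnadjp (i + 2) (i - 1) (by linear_combination -h4))
        · exact absurd hyq (hnadjm (i + 2) (i + 1) (by ring))
      obtain ⟨A, hcoup, hdg, hsp⟩ := bijCoupling hxy (fun _ => c i) hh1 hh2 hh3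
      exact master hxy A hcoup hdg hsp
    · -- case 2 : j = i + 2 only
      subst hA
      have hadjyq : G.Adj (c (i + 2)) (c (i - 1)) := by
        apply hadjcc
        · intro h
          exact hij1 (by linear_combination h)
        · intro h
          exact h2z (by linear_combination -h)
        · intro h
          exact hB2 (by linear_combination -h)
      have hadjxp : G.Adj (c i) (c (i + 3)) := by
        apply hadjcc
        · intro h
          exact hij1 (by linear_combination -h)
        · intro h
          exact hB2 (by linear_combination h)
        · intro h
          exact h2z (by linear_combination h)
      have hnyp3 : ¬ G.Adj (c (i + 2)) (c (i + 3)) := hnadjp (i + 2) (i + 3) (by ring)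
      have hnxq1 : ¬ G.Adj (c i) (c (i - 1)) := hnadjm i (i - 1) rfl
      have hsupp : ∀ p, exc G (c i) (c (i+2)) p ≠ 0 →
          p = c (i + 2) ∨ p = c (i + 3) := by
        intro p hap
        obtain ⟨hxp, hp3⟩ := hdecompa p hap
        rcases hp3 with rfl | rfl | rfl
        · exact Or.inl rfl
        · exact absurd hxp (hnadjp i (i + 2 - 1) (by ring))
        · exact Or.inr (by rw [show i + 2 + 1 = i + 3 by ring])
      have hne23 : c (i + 3) ≠ c (i + 2) := fun h => h1z (by linear_combination hc h)
      have hh1 : ∀ p, exc G (c i) (c (i+2)) p ≠ 0 →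
          exc G (c (i+2)) (c i) (if p = c (i + 2) then c (i - 1) else c i)
            = exc G (c i) (c (i+2)) p ∧
          (p = (if p = c (i + 2) then c (i - 1) else c i) ∨
            G.Adj p (if p = c (i + 2) then c (i - 1) else c i)) := by
        intro p hap
        rcases hsupp p hap with rfl | rfl
        · rw [if_pos rfl]
          constructor
          · rw [hbval _ hadjyq hnxq1, haval _ hxy (G.irrefl (v := c (i+2)))]
          · exact Or.inr hadjyq
        · rw [if_neg hne23]
          constructor
          · rw [hbval _ hxy.symm (G.irrefl (v := c i)), haval _ hadjxp hnyp3]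
          · exact Or.inr hadjxp.symm
      have hh2 : ∀ p p', exc G (c i) (c (i+2)) p ≠ 0 → exc G (c i) (c (i+2)) p' ≠ 0 →
          (if p = c (i + 2) then c (i - 1) else c i)
            = (if p' = c (i + 2) then c (i - 1) else c i) → p = p' := by
        intro p p' hap hap' hff
        rcases hsupp p hap with rfl | rfl <;> rcases hsupp p' hap' with rfl | rfl
        · rfl
        · rw [if_pos rfl, if_neg hne23] at hff
          exact absurd (hc hff) (fun h => h1z (by linear_combination -h))
        · rw [if_pos rfl, if_neg hne23] at hff
          exact absurd (hc hff) (fun h => h1z (by linear_combination h))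
        · rfl
      have hh3 : ∀ q, exc G (c (i+2)) (c i) q ≠ 0 →
          ∃ p, exc G (c i) (c (i+2)) p ≠ 0 ∧
            (if p = c (i + 2) then c (i - 1) else c i) = q := by
        intro q hbq
        obtain ⟨hyq, hq3⟩ := hdecompb q hbq
        rcases hq3 with rfl | rfl | rfl
        · refine ⟨c (i + 3), hanz _ hadjxp hnyp3, ?_⟩
          rw [if_neg hne23]
        · exact ⟨c (i + 2), hay_nz, by rw [if_pos rfl]⟩
        · exact absurd hyq (hnadjm (i + 2) (i + 1) (by ring))
      obtain ⟨A, hcoup, hdg, hsp⟩ := bijCoupling hxy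
        (fun p => if p = c (i + 2) then c (i - 1) else c i) hh1 hh2 hh3
      exact master hxy A hcoup hdg hsp
    · -- case 3 : j = i - 2 only
      subst hB2
      have hadjyq : G.Adj (c (i - 2)) (c (i + 1)) := by
        apply hadjcc
        · intro h
          exact hji1 (by linear_combination -h)
        · intro h
          exact hA (by linear_combination -h)
        · intro h
          exact h2z (by linear_combination h)
      have hadjxp : G.Adj (c i) (c (i - 3)) := by
        apply hadjcc
        · intro h
          exact hji1 (by linear_combination h)
        · intro h
          exact h2z (by linear_combination -h)
        · intro h
          exact hA (by linear_combination h)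
      have hnyp3 : ¬ G.Adj (c (i - 2)) (c (i - 3)) := hnadjm (i - 2) (i - 3) (by ring)
      have hnxq1 : ¬ G.Adj (c i) (c (i + 1)) := hnadjp i (i + 1) rfl
      have hsupp : ∀ p, exc G (c i) (c (i-2)) p ≠ 0 →
          p = c (i - 2) ∨ p = c (i - 3) := by
        intro p hap
        obtain ⟨hxp, hp3⟩ := hdecompa p hap
        rcases hp3 with rfl | rfl | rfl
        · exact Or.inl rfl
        · exact Or.inr (by rw [show i - 2 - 1 = i - 3 by ring])
        · exact absurd hxp (hnadjm i (i - 2 + 1) (by ring))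
      have hne23 : c (i - 3) ≠ c (i - 2) := fun h => h1z (by linear_combination -(hc h))
      have hh1 : ∀ p, exc G (c i) (c (i-2)) p ≠ 0 →
          exc G (c (i-2)) (c i) (if p = c (i - 2) then c (i + 1) else c i)
            = exc G (c i) (c (i-2)) p ∧
          (p = (if p = c (i - 2) then c (i + 1) else c i) ∨
            G.Adj p (if p = c (i - 2) then c (i + 1) else c i)) := by
        intro p hap
        rcases hsupp p hap with rfl | rfl
        · rw [if_pos rfl]
          constructor
          · rw [hbval _ hadjyq hnxq1, haval _ hxy (G.irrefl (v := c (i-2)))]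
          · exact Or.inr hadjyq
        · rw [if_neg hne23]
          constructor
          · rw [hbval _ hxy.symm (G.irrefl (v := c i)), haval _ hadjxp hnyp3]
          · exact Or.inr hadjxp.symm
      have hh2 : ∀ p p', exc G (c i) (c (i-2)) p ≠ 0 → exc G (c i) (c (i-2)) p' ≠ 0 →
          (if p = c (i - 2) then c (i + 1) else c i)
            = (if p' = c (i - 2) then c (i + 1) else c i) → p = p' := by
        intro p p' hap hap' hff
        rcases hsupp p hap with rfl | rfl <;> rcases hsupp p' hap' with rfl | rfl
        · rfl
        · rw [if_pos rfl, if_neg hne23] at hff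
          exact absurd (hc hff) (fun h => h1z (by linear_combination h))
        · rw [if_pos rfl, if_neg hne23] at hff
          exact absurd (hc hff) (fun h => h1z (by linear_combination -h))
        · rfl
      have hh3 : ∀ q, exc G (c (i-2)) (c i) q ≠ 0 →
          ∃ p, exc G (c i) (c (i-2)) p ≠ 0 ∧
            (if p = c (i - 2) then c (i + 1) else c i) = q := by
        intro q hbq
        obtain ⟨hyq, hq3⟩ := hdecompb q hbq
        rcases hq3 with rfl | rfl | rfl
        · refine ⟨c (i - 3), hanz _ hadjxp hnyp3, ?_⟩
          rw [if_neg hne23]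
        · exact absurd hyq (hnadjp (i - 2) (i - 1) (by ring))
        · exact ⟨c (i - 2), hay_nz, by rw [if_pos rfl]⟩
      obtain ⟨A, hcoup, hdg, hsp⟩ := bijCoupling hxy
        (fun p => if p = c (i - 2) then c (i + 1) else c i) hh1 hh2 hh3
      exact master hxy A hcoup hdg hsp
    · -- case 1 : generic position
      set f : Fin n → Fin n :=
        fun p => if h : ∃ t, c t = p then c (Classical.choose h + (i - j)) else p with hfdef
      have hfc : ∀ t : ZMod m, f (c t) = c (t + (i - j)) := by
        intro t
        have hex : ∃ t', c t' = c t := ⟨t, rfl⟩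
        have hch : Classical.choose hex = t := hc (Classical.choose_spec hex)
        rw [hfdef]
        dsimp only
        rw [dif_pos hex, hch]
      have hh1 : ∀ p, exc G (c i) (c j) p ≠ 0 →
          exc G (c j) (c i) (f p) = exc G (c i) (c j) p ∧ (p = f p ∨ G.Adj p (f p)) := by
        intro p hap
        obtain ⟨hxp, hp3⟩ := hdecompa p hap
        rcases hp3 with rfl | rfl | rfl
        · rw [hfc j, show j + (i - j) = i by ring]
          exact ⟨hval_ab, Or.inr hxy.symm⟩
        · rw [hfc (j - 1), show j - 1 + (i - j) = i - 1 by ring]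
          have hadjyq : G.Adj (c j) (c (i - 1)) := by
            apply hadjcc
            · intro h
              exact hij1 (by linear_combination h)
            · intro h
              exact hij (by linear_combination h)
            · intro h
              exact hB2 (by linear_combination -h)
          constructor
          · rw [hbval _ hadjyq (hnadjm i (i - 1) rfl),
              haval _ hxp (hnadjm j (j - 1) rfl)]
          · refine Or.inr (hadjcc (i - 1) (j - 1) ?_ ?_ ?_)
            · intro h
              exact hij (by linear_combination h)
            · intro h
              exact hji1 (by linear_combination -h)
            · intro h
              exact hij1 (by linear_combination h)
        · rw [hfc (j + 1), show j + 1 + (i - j) = i + 1 by ring]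
          have hadjyq : G.Adj (c j) (c (i + 1)) := by
            apply hadjcc
            · intro h
              exact hji1 (by linear_combination -h)
            · intro h
              exact hA (by linear_combination -h)
            · intro h
              exact hij (by linear_combination h)
          constructor
          · rw [hbval _ hadjyq (hnadjp i (i + 1) rfl),
              haval _ hxp (hnadjp j (j + 1) rfl)]
          · refine Or.inr (hadjcc (i + 1) (j + 1) ?_ ?_ ?_)
            · intro h
              exact hij (by linear_combination h)
            · intro h
              exact hji1 (by linear_combination -h)
            · intro h
              exact hij1 (by linear_combination h)
      have hh2 : ∀ p p', exc G (c i) (c j) p ≠ 0 → exc G (c i) (c j) p' ≠ 0 →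
          f p = f p' → p = p' := by
        intro p p' hap hap' hff
        have hpr : ∃ t, p = c t := by
          rcases (hdecompa p hap).2 with rfl | rfl | rfl
          · exact ⟨j, rfl⟩
          · exact ⟨j - 1, rfl⟩
          · exact ⟨j + 1, rfl⟩
        have hpr' : ∃ t, p' = c t := by
          rcases (hdecompa p' hap').2 with rfl | rfl | rfl
          · exact ⟨j, rfl⟩
          · exact ⟨j - 1, rfl⟩
          · exact ⟨j + 1, rfl⟩
        obtain ⟨t, rfl⟩ := hpr
        obtain ⟨t', rfl⟩ := hpr'
        rw [hfc t, hfc t'] at hff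
        exact congrArg c (by linear_combination hc hff)
      have hh3 : ∀ q, exc G (c j) (c i) q ≠ 0 →
          ∃ p, exc G (c i) (c j) p ≠ 0 ∧ f p = q := by
        intro q hbq
        obtain ⟨hyq, hq3⟩ := hdecompb q hbq
        rcases hq3 with rfl | rfl | rfl
        · refine ⟨c j, hay_nz, ?_⟩
          rw [hfc j, show j + (i - j) = i by ring]
        · refine ⟨c (j - 1), ?_, ?_⟩
          · apply hanz
            · apply hadjcc
              · intro h
                exact hji1 (by linear_combination h)
              · intro h
                exact hij (by linear_combination -h)
              · intro h
                exact hA (by linear_combination h)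
            · exact hnadjm j (j - 1) rfl
          · rw [hfc (j - 1), show j - 1 + (i - j) = i - 1 by ring]
        · refine ⟨c (j + 1), ?_, ?_⟩
          · apply hanz
            · apply hadjcc
              · intro h
                exact hij1 (by linear_combination -h)
              · intro h
                exact hB2 (by linear_combination h)
              · intro h
                exact hij (by linear_combination -h)
            · exact hnadjp j (j + 1) rfl
          · rw [hfc (j + 1), show j + 1 + (i - j) = i + 1 by ring]
      obtain ⟨A, hcoup, hdg, hsp⟩ := bijCoupling hxy f hh1 hh2 hh3
      exact master hxy A hcoup hdg hsp
  · -- x on the cycle, y off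
    push_neg at hyc
    obtain ⟨i, hxi⟩ := hxc
    subst hxi
    have hdx : graphDeg G (c i) = n - 3 := hdeg_on i
    have hdy : graphDeg G y = n - 1 := hdeg_off y hyc
    have hdxR : (graphDeg G (c i) : ℝ) = (n:ℝ) - 3 := by
      rw [hdx, Nat.cast_sub (by omega)]; norm_num
    have hdyR : (graphDeg G y : ℝ) = (n:ℝ) - 1 := by
      rw [hdy, Nat.cast_sub (by omega)]; norm_num
    have hle : (1:ℝ) / (graphDeg G y : ℝ) ≤ 1 / (graphDeg G (c i) : ℝ) := by
      rw [hdxR, hdyR]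
      exact one_div_le_one_div_of_le hc3 (by linarith)
    have hdiffnn : (0:ℝ) ≤ 1/((n:ℝ)-3) - 1/((n:ℝ)-1) := by
      have := one_div_le_one_div_of_le hc3 (show (n:ℝ)-3 ≤ (n:ℝ)-1 by linarith)
      linarith
    have hKnn : (0:ℝ) ≤ (1/((n:ℝ)-3) - 1/((n:ℝ)-1)) * (1/((n:ℝ)-1)) :=
      mul_nonneg hdiffnn (by positivity)
    have hadjy : ∀ w : Fin n, w ≠ y → G.Adj y w := by
      intro w hw
      rw [hadj]
      refine ⟨Ne.symm hw, ?_⟩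
      rintro ⟨k, ⟨h1, _⟩ | ⟨_, h2⟩⟩
      · exact hyc k h1.symm
      · exact hyc (k + 1) h2.symm
    have hB : badSum G (c i) y ≤ exc G (c i) y y * exc G y (c i) (c i) := by
      have hay : exc G (c i) y y = 1/((n:ℝ)-3) := by
        rw [exc_eq_of hxy (G.irrefl (v := y)), hdxR]
      have hbx : exc G y (c i) (c i) = 1/((n:ℝ)-1) := by
        rw [exc_eq_of hxy.symm (G.irrefl (v := c i)), hdyR]
      set s : Finset (Fin n × Fin n) :=
        {(c (i + 2), c (i + 1)), (c (i - 2), c (i - 1))} with hsdef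
      have h0 : ∀ p q : Fin n, (p, q) ∉ s → ¬(p = q ∨ G.Adj p q) →
          exc G (c i) y p * exc G y (c i) q = 0 := by
        intro p q hps hnR
        by_contra hne
        obtain ⟨hap, hbq⟩ := exc_prod_ne hne
        have hxp : G.Adj (c i) p := adj_of_exc_ne hap
        have hpq : p ≠ q := fun h => hnR (Or.inl h)
        have hnxq : ¬ G.Adj (c i) q := fun h => hbq (exc_zero_of_le hle h)
        have hqx : q ≠ c i := fun h => hnR (Or.inr (by rw [h]; exact hxp.symm))
        -- q is one of the two cycle-neighbours of x = c i
        have hq' : q = c (i - 1) ∨ q = c (i + 1) := by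
          have := (hon i q)
          rw [iff_iff_implies_and_implies] at this
          by_contra hcon
          push_neg at hcon
          exact hnxq (this.2 ⟨hqx, hcon.1, hcon.2⟩)
        have hnadj : ¬ G.Adj p q := fun h => hnR (Or.inr h)
        have hEpq : ∃ k : ZMod m, (p = c k ∧ q = c (k + 1)) ∨ (q = c k ∧ p = c (k + 1)) := by
          by_contra hcon
          exact hnadj ((hadj p q).2 ⟨hpq, hcon⟩)
        obtain ⟨k, hk⟩ := hEpq
        apply hps
        rw [hsdef]
        simp only [Finset.mem_insert, Finset.mem_singleton]
        rcases hq' with hq1 | hq1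
        · rcases hk with ⟨hpk, hqk⟩ | ⟨hqk, hpk⟩
          · -- q = c (k+1) = c (i-1), so k = i-2, p = c (i-2)
            have hk' : k = i - 2 := by
              have := hc (hqk.symm.trans hq1)
              linear_combination this
            rw [hk'] at hpk
            right
            rw [hpk, hq1]
          · -- q = c k = c (i-1), p = c (k+1) = c i = x, impossible
            exfalso
            have hk' : k = i - 1 := hc (hqk.symm.trans hq1)
            rw [hk'] at hpk
            rw [show i - 1 + 1 = i by ring] at hpk
            rw [hpk] at hap
            exact hap (exc_fst_self G (c i) y)
        · rcases hk with ⟨hpk, hqk⟩ | ⟨hqk, hpk⟩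
          · exfalso
            have hk' : k = i := by
              have := hc (hqk.symm.trans hq1)
              linear_combination this
            rw [hk'] at hpk
            rw [hpk] at hap
            exact hap (exc_fst_self G (c i) y)
          · have hk' : k = i + 1 := hc (hqk.symm.trans hq1)
            rw [hk'] at hpk
            left
            rw [hpk, hq1, show i + 1 + 1 = i + 2 by ring]
      have hKb : ∀ p q : Fin n, (p, q) ∈ s → ¬(p = q ∨ G.Adj p q) →
          exc G (c i) y p * exc G y (c i) q
            ≤ (1/((n:ℝ)-3) - 1/((n:ℝ)-1)) * (1/((n:ℝ)-1)) := by
        intro p q hps _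
        rw [hsdef] at hps
        simp only [Finset.mem_insert, Finset.mem_singleton, Prod.mk.injEq] at hps
        have hpr : ∃ t : ZMod m, p = c t := by
          rcases hps with ⟨h1, _⟩ | ⟨h1, _⟩
          · exact ⟨i + 2, h1⟩
          · exact ⟨i - 2, h1⟩
        obtain ⟨t, hpt⟩ := hpr
        have hyp : G.Adj y p := hadjy p (by rw [hpt]; exact hyc t)
        have hap2 : exc G (c i) y p ≤ 1/((n:ℝ)-3) - 1/((n:ℝ)-1) := by
          have hh1 : vertexMeasure G (c i) p ≤ 1/((n:ℝ)-3) := by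
            have := vertexMeasure_le G (c i) p
            rwa [hdxR] at this
          have hh2 : vertexMeasure G y p = 1/((n:ℝ)-1) := by
            rw [vertexMeasure_of_adj hyp, hdyR]
          unfold exc
          apply max_le _ hdiffnn
          linarith
        have hbq2 : exc G y (c i) q ≤ 1/((n:ℝ)-1) := by
          calc exc G y (c i) q ≤ vertexMeasure G y q := exc_le G y (c i) q
            _ ≤ 1/(graphDeg G y : ℝ) := vertexMeasure_le G y q
            _ = 1/((n:ℝ)-1) := by rw [hdyR]
        exact mul_le_mul hap2 hbq2 (exc_nonneg G y (c i) q) hdiffnn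
      have hcard2 : ((s.card : ℕ) : ℝ) ≤ 2 := by
        have h1 : s.card ≤ 2 := by
          rw [hsdef]
          exact (Finset.card_insert_le _ _).trans (by simp)
        exact_mod_cast h1
      rw [hay, hbx]
      calc badSum G (c i) y
          ≤ (s.card : ℝ) * ((1/((n:ℝ)-3) - 1/((n:ℝ)-1)) * (1/((n:ℝ)-1))) :=
            badSum_le_of _ _ hKnn h0 hKb
        _ ≤ 2 * ((1/((n:ℝ)-3) - 1/((n:ℝ)-1)) * (1/((n:ℝ)-1))) :=
            mul_le_mul_of_nonneg_right hcard2 hKnn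
        _ = 2 * ((1/((n:ℝ)-1)) * (1/((n:ℝ)-3) - 1/((n:ℝ)-1))) := by ring
        _ ≤ (1/((n:ℝ)-1)) * (1/((n:ℝ)-3)) := arith2 hN6
        _ = (1/((n:ℝ)-3)) * (1/((n:ℝ)-1)) := by ring
    obtain ⟨A, hA, hd, hs⟩ := anchor hxy hB
    exact master hxy A hA hd hs
  · -- x off the cycle, y on
    push_neg at hxc
    obtain ⟨j, hyj⟩ := hyc
    subst hyj
    have hdy : graphDeg G (c j) = n - 3 := hdeg_on j
    have hdx : graphDeg G x = n - 1 := hdeg_off x hxc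
    have hdyR : (graphDeg G (c j) : ℝ) = (n:ℝ) - 3 := by
      rw [hdy, Nat.cast_sub (by omega)]; norm_num
    have hdxR : (graphDeg G x : ℝ) = (n:ℝ) - 1 := by
      rw [hdx, Nat.cast_sub (by omega)]; norm_num
    have hle : (1:ℝ) / (graphDeg G x : ℝ) ≤ 1 / (graphDeg G (c j) : ℝ) := by
      rw [hdxR, hdyR]
      exact one_div_le_one_div_of_le hc3 (by linarith)
    have hdiffnn : (0:ℝ) ≤ 1/((n:ℝ)-3) - 1/((n:ℝ)-1) := by
      have := one_div_le_one_div_of_le hc3 (show (n:ℝ)-3 ≤ (n:ℝ)-1 by linarith)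
      linarith
    have hKnn : (0:ℝ) ≤ (1/((n:ℝ)-1)) * (1/((n:ℝ)-3) - 1/((n:ℝ)-1)) :=
      mul_nonneg (by positivity) hdiffnn
    have hadjx : ∀ w : Fin n, w ≠ x → G.Adj x w := by
      intro w hw
      rw [hadj]
      refine ⟨Ne.symm hw, ?_⟩
      rintro ⟨k, ⟨h1, _⟩ | ⟨_, h2⟩⟩
      · exact hxc k h1.symm
      · exact hxc (k + 1) h2.symm
    have hB : badSum G x (c j) ≤ exc G x (c j) (c j) * exc G (c j) x x := by
      have hay : exc G x (c j) (c j) = 1/((n:ℝ)-1) := by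
        rw [exc_eq_of hxy (G.irrefl (v := c j)), hdxR]
      have hbx : exc G (c j) x x = 1/((n:ℝ)-3) := by
        rw [exc_eq_of hxy.symm (G.irrefl (v := x)), hdyR]
      set s : Finset (Fin n × Fin n) :=
        {(c (j + 1), c (j + 2)), (c (j - 1), c (j - 2))} with hsdef
      have h0 : ∀ p q : Fin n, (p, q) ∉ s → ¬(p = q ∨ G.Adj p q) →
          exc G x (c j) p * exc G (c j) x q = 0 := by
        intro p q hps hnR
        by_contra hne
        obtain ⟨hap, hbq⟩ := exc_prod_ne hne
        have hyq : G.Adj (c j) q := adj_of_exc_ne hbq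
        have hpq : p ≠ q := fun h => hnR (Or.inl h)
        have hnyp : ¬ G.Adj (c j) p := fun h => hap (exc_zero_of_le hle h)
        have hpy : p ≠ c j := fun h => hnR (Or.inr (by rw [h]; exact hyq))
        have hp' : p = c (j - 1) ∨ p = c (j + 1) := by
          have := (hon j p)
          rw [iff_iff_implies_and_implies] at this
          by_contra hcon
          push_neg at hcon
          exact hnyp (this.2 ⟨hpy, hcon.1, hcon.2⟩)
        have hnadj : ¬ G.Adj p q := fun h => hnR (Or.inr h)
        have hEpq : ∃ k : ZMod m, (p = c k ∧ q = c (k + 1)) ∨ (q = c k ∧ p = c (k + 1)) := by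
          by_contra hcon
          exact hnadj ((hadj p q).2 ⟨hpq, hcon⟩)
        obtain ⟨k, hk⟩ := hEpq
        apply hps
        rw [hsdef]
        simp only [Finset.mem_insert, Finset.mem_singleton]
        rcases hp' with hp1 | hp1
        · rcases hk with ⟨hpk, hqk⟩ | ⟨hqk, hpk⟩
          · -- p = c k = c (j-1), q = c (k+1) = c (j-1+1) = c j, impossible
            exfalso
            have hk' : k = j - 1 := hc (hpk.symm.trans hp1)
            rw [hk', show j - 1 + 1 = j by ring] at hqk
            rw [hqk] at hbq
            exact hbq (exc_fst_self G (c j) x)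
          · -- p = c (k+1) = c (j-1), so k = j-2, q = c (j-2)
            have hk' : k = j - 2 := by
              have := hc (hpk.symm.trans hp1)
              linear_combination this
            rw [hk'] at hqk
            right
            rw [hp1, hqk]
        · rcases hk with ⟨hpk, hqk⟩ | ⟨hqk, hpk⟩
          · -- p = c k = c (j+1), q = c (j+2)
            have hk' : k = j + 1 := hc (hpk.symm.trans hp1)
            rw [hk'] at hqk
            left
            rw [hp1, hqk, show j + 1 + 1 = j + 2 by ring]
          · -- p = c (k+1) = c (j+1), so k = j, q = c j, impossible
            exfalso
            have hk' : k = j := by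
              have := hc (hpk.symm.trans hp1)
              linear_combination this
            rw [hk'] at hqk
            rw [hqk] at hbq
            exact hbq (exc_fst_self G (c j) x)
      have hKb : ∀ p q : Fin n, (p, q) ∈ s → ¬(p = q ∨ G.Adj p q) →
          exc G x (c j) p * exc G (c j) x q
            ≤ (1/((n:ℝ)-1)) * (1/((n:ℝ)-3) - 1/((n:ℝ)-1)) := by
        intro p q hps _
        rw [hsdef] at hps
        simp only [Finset.mem_insert, Finset.mem_singleton, Prod.mk.injEq] at hps
        have hqr : ∃ t : ZMod m, q = c t := by
          rcases hps with ⟨_, h2⟩ | ⟨_, h2⟩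
          · exact ⟨j + 2, h2⟩
          · exact ⟨j - 2, h2⟩
        obtain ⟨t, hqt⟩ := hqr
        have hxq : G.Adj x q := hadjx q (by rw [hqt]; exact hxc t)
        have hap2 : exc G x (c j) p ≤ 1/((n:ℝ)-1) := by
          calc exc G x (c j) p ≤ vertexMeasure G x p := exc_le G x (c j) p
            _ ≤ 1/(graphDeg G x : ℝ) := vertexMeasure_le G x p
            _ = 1/((n:ℝ)-1) := by rw [hdxR]
        have hbq2 : exc G (c j) x q ≤ 1/((n:ℝ)-3) - 1/((n:ℝ)-1) := by
          have hh1 : vertexMeasure G (c j) q ≤ 1/((n:ℝ)-3) := by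
            have := vertexMeasure_le G (c j) q
            rwa [hdyR] at this
          have hh2 : vertexMeasure G x q = 1/((n:ℝ)-1) := by
            rw [vertexMeasure_of_adj hxq, hdxR]
          unfold exc
          apply max_le _ hdiffnn
          linarith
        exact mul_le_mul hap2 hbq2 (exc_nonneg G (c j) x q) (by positivity)
      have hcard2 : ((s.card : ℕ) : ℝ) ≤ 2 := by
        have hcard1 : s.card ≤ 2 := by
          rw [hsdef]
          exact (Finset.card_insert_le _ _).trans (by simp)
        exact_mod_cast hcard1
      rw [hay, hbx]
      calc badSum G x (c j)
          ≤ (s.card : ℝ) * ((1/((n:ℝ)-1)) * (1/((n:ℝ)-3) - 1/((n:ℝ)-1))) :=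
            badSum_le_of _ _ hKnn h0 hKb
        _ ≤ 2 * ((1/((n:ℝ)-1)) * (1/((n:ℝ)-3) - 1/((n:ℝ)-1))) :=
            mul_le_mul_of_nonneg_right hcard2 hKnn
        _ ≤ (1/((n:ℝ)-1)) * (1/((n:ℝ)-3)) := arith2 hN6
    obtain ⟨A, hA, hd, hs⟩ := anchor hxy hB
    exact master hxy A hA hd hs
  · -- both off the cycle
    push_neg at hxc
    push_neg at hyc
    have hB : badSum G x y ≤ exc G x y y * exc G y x x := by
      apply badSum_zero_of
      intro p q hnR
      by_contra hne
      obtain ⟨hap, hbq⟩ := exc_prod_ne hne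
      have hxp : G.Adj x p := adj_of_exc_ne hap
      have hyq : G.Adj y q := adj_of_exc_ne hbq
      have hpq : p ≠ q := fun h => hnR (Or.inl h)
      rcases le_total (1 / (graphDeg G x : ℝ)) (1 / (graphDeg G y : ℝ)) with hab | hab
      · have hnyp : ¬ G.Adj y p := fun h => hap (exc_zero_of_le hab h)
        have hpy : p ≠ y := fun h => hnR (Or.inr (by rw [h]; exact hyq))
        have Hyp : ∃ k : ZMod m, (y = c k ∧ p = c (k + 1)) ∨ (p = c k ∧ y = c (k + 1)) := by
          by_contra hcon
          exact hnyp ((hadj y p).2 ⟨Ne.symm hpy, hcon⟩)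
        obtain ⟨k, ⟨h1, _⟩ | ⟨_, h2⟩⟩ := Hyp
        · exact hyc k h1.symm
        · exact hyc (k + 1) h2.symm
      · have hnxq : ¬ G.Adj x q := fun h => hbq (exc_zero_of_le hab h)
        have hqx : q ≠ x := fun h => hnR (Or.inr (by rw [h]; exact hxp.symm))
        have Hxq : ∃ k : ZMod m, (x = c k ∧ q = c (k + 1)) ∨ (q = c k ∧ x = c (k + 1)) := by
          by_contra hcon
          exact hnxq ((hadj x q).2 ⟨Ne.symm hqx, hcon⟩)
        obtain ⟨k, ⟨h1, _⟩ | ⟨_, h2⟩⟩ := Hxq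
        · exact hxc k h1.symm
        · exact hxc (k + 1) h2.symm
    obtain ⟨A, hA, hd, hs⟩ := anchor hxy hB
    exact master hxy A hA hd hs

end Family3


theorem stmt18 :
    (∀ (n m : ℕ), 4 ≤ n → 1 ≤ m → m ≤ n / 2 →
      ∀ (M : Finset (Sym2 (Fin n))), IsMatchingSet M → M.card = m →
      ∀ (G : SimpleGraph (Fin n)), G = ⊤ \ SimpleGraph.fromEdgeSet ↑M →
      ∀ x y : Fin n, G.Adj x y →
        ricciCurv G x y =
          (triCount G x y : ℝ) / (max (graphDeg G x) (graphDeg G y) : ℝ) ∧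
        0 ≤ ricciCurv G x y) ∧
    (∀ (n m : ℕ), 4 ≤ n → 1 ≤ m → m ≤ n - 3 →
      ∀ (u₀ : Fin n) (S : Finset (Fin n)), u₀ ∉ S → S.card = m →
      ∀ (G : SimpleGraph (Fin n)),
        G = ⊤ \ SimpleGraph.fromEdgeSet {e | ∃ x ∈ S, e = s(u₀, x)} →
      ∀ x y : Fin n, G.Adj x y →
        ricciCurv G x y =
          (triCount G x y : ℝ) / (max (graphDeg G x) (graphDeg G y) : ℝ) ∧
        0 ≤ ricciCurv G x y) ∧
    (∀ (n m : ℕ), 6 ≤ n → 3 ≤ m → m ≤ n - 1 →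
      ∀ (c : ZMod m → Fin n), Function.Injective c →
      ∀ (G : SimpleGraph (Fin n)),
        G = ⊤ \ SimpleGraph.fromEdgeSet {e | ∃ i : ZMod m, e = s(c i, c (i + 1))} →
      ∀ x y : Fin n, G.Adj x y →
        ricciCurv G x y =
          (triCount G x y : ℝ) / (max (graphDeg G x) (graphDeg G y) : ℝ) ∧
        0 ≤ ricciCurv G x y) := by
  exact ⟨family1, family2, family3⟩
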